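/- arXiv:2307.05312 — 9 statements merged into one kernel-verified Lean document; each statement's English description precedes it below -/
import Mathlib

section
/- Let A, B, D be symmetric 3×3 real matrices with A, D, A − 3·B·D⁻¹·B and D − 3·B·A⁻¹·B invertible, h > 0, and let U, V, W ∈ ℝ³. With 𝒜 = (A − 3·B·D⁻¹·B)⁻¹, ℬ = −3·𝒜·B·D⁻¹, 𝒟 = (D − 3·B·A⁻¹·B)⁻¹, v₁ = (2/h)·(ℬᵀ·U + 3·𝒟·V) and v₂ = (h/6)·(3·𝒜·V + ℬ·W), one has v₂ = (h²/12)·𝒜·( 𝒟⁻¹·v₁ + (6/h)·B·(A⁻¹·U − D⁻¹·W) ). In particular the compliance thermoelastic tensors u, v₁, v₂, w are not independent: v₂ is determined by v₁, U and W. -/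
open Matrix

theorem aux_key
    (A B D : Matrix (Fin 3) (Fin 3) ℝ)
    (hA : A.IsSymm) (hB : B.IsSymm) (hD : D.IsSymm)
    (hAinv : IsUnit A.det) (hDinv : IsUnit D.det)
    (h1 : IsUnit (A - (3 : ℝ) • (B * D⁻¹ * B)).det)
    (h2 : IsUnit (D - (3 : ℝ) • (B * A⁻¹ * B)).det) :
    ((D - (3 : ℝ) • (B * A⁻¹ * B))⁻¹)⁻¹ *
      ((-3 : ℝ) • ((A - (3 : ℝ) • (B * D⁻¹ * B))⁻¹ * B * D⁻¹)).transpose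
      = (-3 : ℝ) • (B * A⁻¹) := by
  set calA := (A - (3 : ℝ) • (B * D⁻¹ * B))⁻¹ with hcalA
  have hDinvS : (D⁻¹)ᵀ = D⁻¹ := by rw [Matrix.transpose_nonsing_inv, hD.eq]
  have hM1S : (A - (3:ℝ) • (B * D⁻¹ * B))ᵀ = A - (3:ℝ) • (B * D⁻¹ * B) := by
    simp [Matrix.transpose_mul, hDinvS, hB.eq, hA.eq, Matrix.mul_assoc]
  have hAS : calAᵀ = calA := by rw [hcalA, Matrix.transpose_nonsing_inv, hM1S]
  have hBT : ((-3 : ℝ) • (calA * B * D⁻¹)).transpose = (-3:ℝ) • (D⁻¹ * (B * calA)) := by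
    simp [Matrix.transpose_smul, Matrix.transpose_mul, hDinvS, hB.eq, hAS, Matrix.mul_assoc]
  have hcalDinv : ((D - (3 : ℝ) • (B * A⁻¹ * B))⁻¹)⁻¹ = D - (3 : ℝ) • (B * A⁻¹ * B) :=
    Matrix.nonsing_inv_nonsing_inv _ h2
  have e1 : (A - (3:ℝ) • (B * D⁻¹ * B)) * calA = 1 := Matrix.mul_nonsing_inv _ h1
  have hAiA : ∀ X : Matrix (Fin 3) (Fin 3) ℝ, A⁻¹ * (A * X) = X := fun X => by
    rw [← Matrix.mul_assoc, Matrix.nonsing_inv_mul A hAinv, Matrix.one_mul]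
  have hDDi : ∀ X : Matrix (Fin 3) (Fin 3) ℝ, D * (D⁻¹ * X) = X := fun X => by
    rw [← Matrix.mul_assoc, Matrix.mul_nonsing_inv D hDinv, Matrix.one_mul]
  rw [hcalDinv, hBT]
  have step : (D - (3:ℝ) • (B * A⁻¹ * B)) * ((-3:ℝ) • (D⁻¹ * (B * calA)))
      = (-3:ℝ) • ((B * A⁻¹) * ((A - (3:ℝ) • (B * D⁻¹ * B)) * calA)) := by
    simp [Matrix.sub_mul, Matrix.mul_sub, Matrix.smul_mul, Matrix.mul_smul,
      Matrix.mul_assoc, hDDi, hAiA]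
  rw [step, e1, Matrix.mul_one]

theorem thermoelastic_compliance_v2_determined_by_v1
    (A B D : Matrix (Fin 3) (Fin 3) ℝ)
    (hA : A.IsSymm) (hB : B.IsSymm) (hD : D.IsSymm)
    (hAinv : IsUnit A.det) (hDinv : IsUnit D.det)
    (h1 : IsUnit (A - (3 : ℝ) • (B * D⁻¹ * B)).det)
    (h2 : IsUnit (D - (3 : ℝ) • (B * A⁻¹ * B)).det)
    (h : ℝ) (hh : 0 < h) (U V W : Fin 3 → ℝ) :
    let calA := (A - (3 : ℝ) • (B * D⁻¹ * B))⁻¹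
    let calB := (-3 : ℝ) • (calA * B * D⁻¹)
    let calD := (D - (3 : ℝ) • (B * A⁻¹ * B))⁻¹
    let v₁ := (2 / h) • (calB.transpose.mulVec U + (3 : ℝ) • calD.mulVec V)
    let v₂ := (h / 6) • ((3 : ℝ) • calA.mulVec V + calB.mulVec W)
    v₂ = (h ^ 2 / 12) • calA.mulVec
      (calD⁻¹.mulVec v₁ + (6 / h) • B.mulVec (A⁻¹.mulVec U - D⁻¹.mulVec W)) := by
  intro calA calB calD v₁ v₂
  have hh' : h ≠ 0 := ne_of_gt hh
  have key1 : calD⁻¹ * calB.transpose = (-3 : ℝ) • (B * A⁻¹) :=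
    aux_key A B D hA hB hD hAinv hDinv h1 h2
  have key2 : calD⁻¹ * calD = 1 := by
    show ((D - (3 : ℝ) • (B * A⁻¹ * B))⁻¹)⁻¹ * (D - (3 : ℝ) • (B * A⁻¹ * B))⁻¹ = 1
    rw [Matrix.nonsing_inv_nonsing_inv _ h2]
    exact Matrix.mul_nonsing_inv _ h2
  show (h / 6) • ((3 : ℝ) • calA.mulVec V + calB.mulVec W)
      = (h ^ 2 / 12) • calA.mulVec
        (calD⁻¹.mulVec ((2 / h) • (calB.transpose.mulVec U + (3 : ℝ) • calD.mulVec V))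
          + (6 / h) • B.mulVec (A⁻¹.mulVec U - D⁻¹.mulVec W))
  have hcB : calB.mulVec W = ((-3 : ℝ) • (calA * (B * D⁻¹))).mulVec W := by
    show ((-3 : ℝ) • (calA * B * D⁻¹)).mulVec W = _
    rw [Matrix.mul_assoc]
  have key1' : calA * (calD⁻¹ * calB.transpose) = (-3 : ℝ) • (calA * (B * A⁻¹)) := by
    rw [key1, Matrix.mul_smul]
  have key2' : calA * (calD⁻¹ * calD) = calA := by rw [key2, Matrix.mul_one]
  rw [hcB]
  simp only [Matrix.mulVec_add, Matrix.mulVec_smul, Matrix.mulVec_sub,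
    Matrix.mulVec_mulVec, Matrix.smul_mulVec, Matrix.mul_assoc, key1', key2']
  match_scalars <;> field_simp <;> ring
end

section
/- Let n ≥ 1, let δ : {1,…,n} → ℝ be ply orientation angles, let b_k = (2k − n − 1)/n², and let R₁, R_γ, Φ₁, Φ_γ be reals with R₁ ≠ 0. Set ζ = Σ_{k=1}^n b_k·exp(2·i·δ_k) ∈ ℂ. If R₁·exp(2·i·Φ₁)·ζ = 0 (so that the anisotropic polar component R₁ᴮ·exp(2iΦ₁ᴮ) of the elastic coupling tensor B vanishes), then R_γ·exp(2·i·Φ_γ)·ζ = 0; consequently, since T^V = 0, all Cartesian components of the thermoelastic coupling tensor V, namely V₁(θ) = Re(R_γ·e^{2iΦ_γ}·ζ·e^{−2iθ}), V₂(θ) = −Re(R_γ·e^{2iΦ_γ}·ζ·e^{−2iθ}), V₆(θ) = √2·Im(R_γ·e^{2iΦ_γ}·ζ·e^{−2iθ}), vanish for every θ. In words: for a laminate of identical plies, elastic uncoupling (B = O) implies thermal uncoupling (V = O). -/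
open Complex

theorem identical_plies_elastic_uncoupling_implies_thermal_uncoupling
    (n : ℕ) (hn : 1 ≤ n) (δ : Fin n → ℝ)
    (R₁ Rγ Φ₁ Φγ : ℝ) (hR₁ : R₁ ≠ 0) :
    let b : Fin n → ℝ := fun k => (2 * (((k : ℕ) : ℝ) + 1) - (n : ℝ) - 1) / (n : ℝ) ^ 2
    let ζ : ℂ := ∑ k, (b k : ℂ) * Complex.exp (2 * Complex.I * ((δ k : ℝ) : ℂ))
    (R₁ : ℂ) * Complex.exp (2 * Complex.I * ((Φ₁ : ℝ) : ℂ)) * ζ = 0 →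
      ((Rγ : ℂ) * Complex.exp (2 * Complex.I * ((Φγ : ℝ) : ℂ)) * ζ = 0 ∧
        ∀ θ : ℝ,
          ((Rγ : ℂ) * Complex.exp (2 * Complex.I * ((Φγ : ℝ) : ℂ)) * ζ *
            Complex.exp (-2 * Complex.I * (θ : ℂ))).re = 0 ∧
          -((Rγ : ℂ) * Complex.exp (2 * Complex.I * ((Φγ : ℝ) : ℂ)) * ζ *
            Complex.exp (-2 * Complex.I * (θ : ℂ))).re = 0 ∧
          Real.sqrt 2 * ((Rγ : ℂ) * Complex.exp (2 * Complex.I * ((Φγ : ℝ) : ℂ)) * ζ *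
            Complex.exp (-2 * Complex.I * (θ : ℂ))).im = 0) := by
  intro b ζ h
  have hζ : ζ = 0 := by
    rcases mul_eq_zero.1 h with h1 | h2
    · rcases mul_eq_zero.1 h1 with h3 | h4
      · exact absurd (Complex.ofReal_eq_zero.1 h3) hR₁
      · exact absurd h4 (Complex.exp_ne_zero _)
    · exact h2
  refine ⟨by rw [hζ]; ring, fun θ => ?_⟩
  rw [hζ]
  simp
end

section
/- Let A, B be symmetric 3×3 real matrices with A and A − 3·B·A⁻¹·B invertible. Set 𝒮 = (A − 3·B·A⁻¹·B)⁻¹ and ℬ = −3·𝒮·B·A⁻¹. Then: (1) ℬ is symmetric (ℬᵀ = ℬ); and (2) for any U, V ∈ ℝ³, 𝒮·U + ℬ·V = ℬᵀ·V + 𝒮·U. In words: for a quasi-homogeneous laminate (D = A), the compliance tensors satisfy 𝒜 = 𝒟 and ℬ = ℬᵀ, and if moreover W = U then the compliance thermoelastic tensors satisfy u = w: quasi-homogeneity holds for stiffness and compliance, for both elastic and thermal responses. -/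
open Matrix

theorem quasi_homogeneous_compliance_symmetric
    (A B : Matrix (Fin 3) (Fin 3) ℝ)
    (hA : A.IsSymm) (hB : B.IsSymm)
    (hAinv : IsUnit A.det)
    (hSinv : IsUnit (A - (3 : ℝ) • (B * A⁻¹ * B)).det) :
    let S := (A - (3 : ℝ) • (B * A⁻¹ * B))⁻¹
    let calB := (-3 : ℝ) • (S * B * A⁻¹)
    calB.transpose = calB ∧
      ∀ U V : Fin 3 → ℝ,
        S.mulVec U + calB.mulVec V = calB.transpose.mulVec V + S.mulVec U := by
  intro S calB
  set M : Matrix (Fin 3) (Fin 3) ℝ := A - (3 : ℝ) • (B * A⁻¹ * B) with hM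
  have hAi : A⁻¹ᵀ = A⁻¹ := by
    rw [Matrix.transpose_nonsing_inv, hA.eq]
  have hMsymm : Mᵀ = M := by
    simp [hM, Matrix.transpose_sub, Matrix.transpose_smul, Matrix.transpose_mul,
      hAi, hA.eq, hB.eq, Matrix.mul_assoc]
  have hSsymm : Sᵀ = S := by
    rw [show S = M⁻¹ from rfl, Matrix.transpose_nonsing_inv, hMsymm]
  have hSM : S * M = 1 := Matrix.nonsing_inv_mul M hSinv
  have hMS : M * S = 1 := Matrix.mul_nonsing_inv M hSinv
  have hcomm : M * (A⁻¹ * B) = (B * A⁻¹) * M := by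
    rw [hM]
    rw [Matrix.sub_mul, Matrix.mul_sub]
    congr 1
    · rw [← Matrix.mul_assoc, Matrix.mul_nonsing_inv A hAinv, Matrix.one_mul,
        Matrix.mul_assoc, Matrix.nonsing_inv_mul A hAinv, Matrix.mul_one]
    · rw [Matrix.smul_mul, Matrix.mul_smul]
      congr 1
      noncomm_ring
  have hkey : A⁻¹ * B * S = S * B * A⁻¹ := calc
    A⁻¹ * B * S = (S * M) * (A⁻¹ * B) * S := by rw [hSM, Matrix.one_mul]
    _ = S * (M * (A⁻¹ * B)) * S := by rw [Matrix.mul_assoc S M]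
    _ = S * ((B * A⁻¹) * M) * S := by rw [hcomm]
    _ = S * (B * A⁻¹) * (M * S) := by simp only [Matrix.mul_assoc]
    _ = S * B * A⁻¹ := by rw [hMS, Matrix.mul_one, Matrix.mul_assoc]
  have hBsymm : calBᵀ = calB := by
    show ((-3 : ℝ) • (S * B * A⁻¹))ᵀ = _
    rw [Matrix.transpose_smul, Matrix.transpose_mul, Matrix.transpose_mul,
      hAi, hB.eq, hSsymm, ← Matrix.mul_assoc, hkey]
  exact ⟨hBsymm, fun U V => by rw [hBsymm, add_comm]⟩
end

section
/- Let T₀, T₁, R₀ᴬ, R₀ᴮ, R₀ᴰ, T_γ ∈ ℝ with T₁ ≠ 0, let h > 0, let ε ∈ {−1, 1}, and define A = [[T₀+2T₁+R₀ᴬ, −T₀+2T₁−R₀ᴬ, 0], [−T₀+2T₁−R₀ᴬ, T₀+2T₁+R₀ᴬ, 0], [0, 0, 2(T₀−R₀ᴬ)]], D the same matrix with R₀ᴰ in place of R₀ᴬ, B = [[R₀ᴮ, −R₀ᴮ, 0], [−R₀ᴮ, R₀ᴮ, 0], [0, 0, −2R₀ᴮ]], U = W = (T_γ, T_γ, 0),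 V = (0, 0, 0). Assume A, D, A − 3·B·D⁻¹·B and D − 3·B·A⁻¹·B are invertible. Then the compliance thermoelastic tensors satisfy u = w = (T_γ/(4T₁))·(1, 1, 0) and v₁ = v₂ = (0, 0, 0). In words: a coupled laminate with R₁ᴬ = R₁ᴰ = R₁ᴮ = 0 is a warp- and extension-free thermally stable laminate, with isotropic coefficients of thermal expansion and curvature even though B ≠ O. -/
open Matrix

theorem warp_and_extension_free_thermally_stable
    (T₀ T₁ R₀A R₀B R₀D Tγ : ℝ) (hT₁ : T₁ ≠ 0) (h : ℝ) (hh : 0 < h)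
    (ε : ℝ) (hε : ε = -1 ∨ ε = 1) :
    let A : Matrix (Fin 3) (Fin 3) ℝ :=
      !![T₀ + 2*T₁ + R₀A, -T₀ + 2*T₁ - R₀A, 0;
         -T₀ + 2*T₁ - R₀A, T₀ + 2*T₁ + R₀A, 0;
         0, 0, 2*(T₀ - R₀A)]
    let D : Matrix (Fin 3) (Fin 3) ℝ :=
      !![T₀ + 2*T₁ + R₀D, -T₀ + 2*T₁ - R₀D, 0;
         -T₀ + 2*T₁ - R₀D, T₀ + 2*T₁ + R₀D, 0;
         0, 0, 2*(T₀ - R₀D)]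
    let B : Matrix (Fin 3) (Fin 3) ℝ :=
      !![R₀B, -R₀B, 0; -R₀B, R₀B, 0; 0, 0, -2*R₀B]
    let U : Fin 3 → ℝ := ![Tγ, Tγ, 0]
    let W : Fin 3 → ℝ := ![Tγ, Tγ, 0]
    let V : Fin 3 → ℝ := 0
    let calA := (A - (3 : ℝ) • (B * D⁻¹ * B))⁻¹
    let calB := (-3 : ℝ) • (calA * B * D⁻¹)
    let calD := (D - (3 : ℝ) • (B * A⁻¹ * B))⁻¹
    let u := calA.mulVec U + calB.mulVec V
    let v₁ := (2 / h) • (calB.transpose.mulVec U + (3 : ℝ) • calD.mulVec V)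
    let v₂ := (h / 6) • ((3 : ℝ) • calA.mulVec V + calB.mulVec W)
    let w := calB.transpose.mulVec V + calD.mulVec W
    IsUnit A.det → IsUnit D.det →
    IsUnit (A - (3 : ℝ) • (B * D⁻¹ * B)).det →
    IsUnit (D - (3 : ℝ) • (B * A⁻¹ * B)).det →
      (u = (Tγ / (4 * T₁)) • (![1, 1, 0] : Fin 3 → ℝ) ∧
        w = (Tγ / (4 * T₁)) • (![1, 1, 0] : Fin 3 → ℝ) ∧
        v₁ = 0 ∧ v₂ = 0) := by

  intro A D B U W V calA calB calD u v₁ v₂ w hAd hDd hMd hNd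
  have hc : Tγ / (4 * T₁) * (4 * T₁) = Tγ := by field_simp
  set c : ℝ := Tγ / (4 * T₁) with hcdef
  set e : Fin 3 → ℝ := ![1, 1, 0] with he
  have hAe : A.mulVec (c • e) = U := by
    funext i
    fin_cases i <;>
      simp [A, U, e, Matrix.mulVec, dotProduct, Fin.sum_univ_three] <;>
      nlinarith [hc]
  have hDe : D.mulVec (c • e) = W := by
    funext i
    fin_cases i <;>
      simp [D, W, e, Matrix.mulVec, dotProduct, Fin.sum_univ_three] <;>
      nlinarith [hc]
  have hBe : B.mulVec (c • e) = 0 := by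
    funext i
    fin_cases i <;>
      simp [B, e, Matrix.mulVec, dotProduct, Fin.sum_univ_three] <;> ring
  have hAT : Aᵀ = A := by
    ext i j; fin_cases i <;> fin_cases j <;> simp [A]
  have hDT : Dᵀ = D := by
    ext i j; fin_cases i <;> fin_cases j <;> simp [D]
  have hBT : Bᵀ = B := by
    ext i j; fin_cases i <;> fin_cases j <;> simp [B]
  -- M = A - 3 B D⁻¹ B
  have hMe : (A - (3 : ℝ) • (B * D⁻¹ * B)).mulVec (c • e) = U := by
    rw [Matrix.sub_mulVec, Matrix.smul_mulVec, hAe]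
    rw [show B * D⁻¹ * B = B * D⁻¹ * B from rfl]
    rw [← Matrix.mulVec_mulVec, hBe, Matrix.mulVec_zero, smul_zero, sub_zero]
  have hNe : (D - (3 : ℝ) • (B * A⁻¹ * B)).mulVec (c • e) = W := by
    rw [Matrix.sub_mulVec, Matrix.smul_mulVec, hDe]
    rw [← Matrix.mulVec_mulVec, hBe, Matrix.mulVec_zero, smul_zero, sub_zero]
  have hcalAU : calA.mulVec U = c • e := by
    rw [← hMe, Matrix.mulVec_mulVec,
      show calA * (A - (3 : ℝ) • (B * D⁻¹ * B)) = 1 from Matrix.nonsing_inv_mul _ hMd,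
      Matrix.one_mulVec]
  have hcalDW : calD.mulVec W = c • e := by
    rw [← hNe, Matrix.mulVec_mulVec,
      show calD * (D - (3 : ℝ) • (B * A⁻¹ * B)) = 1 from Matrix.nonsing_inv_mul _ hNd,
      Matrix.one_mulVec]
  have hDinvW : D⁻¹.mulVec W = c • e := by
    rw [← hDe, Matrix.mulVec_mulVec, Matrix.nonsing_inv_mul _ hDd, Matrix.one_mulVec]
  have hcalBW : calB.mulVec W = 0 := by
    show ((-3 : ℝ) • (calA * B * D⁻¹)) *ᵥ W = 0
    rw [Matrix.smul_mulVec, mul_assoc, ← Matrix.mulVec_mulVec,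
      ← Matrix.mulVec_mulVec, hDinvW, hBe, Matrix.mulVec_zero, smul_zero]
  have hcalAT : calAᵀ = calA := by
    show ((A - (3 : ℝ) • (B * D⁻¹ * B))⁻¹)ᵀ = (A - (3 : ℝ) • (B * D⁻¹ * B))⁻¹
    rw [Matrix.transpose_nonsing_inv]
    congr 1
    rw [Matrix.transpose_sub, Matrix.transpose_smul, Matrix.transpose_mul,
      Matrix.transpose_mul, Matrix.transpose_nonsing_inv, hAT, hBT, hDT, mul_assoc]
  have hcalBTU : calBᵀ.mulVec U = 0 := by
    show ((-3 : ℝ) • (calA * B * D⁻¹))ᵀ *ᵥ U = 0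
    rw [Matrix.transpose_smul, Matrix.transpose_mul, Matrix.transpose_mul,
      Matrix.transpose_nonsing_inv, hcalAT, hBT, hDT, Matrix.smul_mulVec,
      ← Matrix.mulVec_mulVec, ← Matrix.mulVec_mulVec, hcalAU, hBe,
      Matrix.mulVec_zero, smul_zero]
  refine ⟨?_, ?_, ?_, ?_⟩
  · show calA.mulVec U + calB.mulVec V = c • ![1, 1, 0]
    rw [show V = 0 from rfl, Matrix.mulVec_zero, add_zero, hcalAU, he]
  · show calBᵀ.mulVec V + calD.mulVec W = c • ![1, 1, 0]
    rw [show V = 0 from rfl, Matrix.mulVec_zero, zero_add, hcalDW, he]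
  · show (2 / h) • (calBᵀ.mulVec U + (3 : ℝ) • calD.mulVec V) = 0
    rw [show V = 0 from rfl, Matrix.mulVec_zero, smul_zero, add_zero, hcalBTU, smul_zero]
  · show (h / 6) • ((3 : ℝ) • calA.mulVec V + calB.mulVec W) = 0
    rw [show V = 0 from rfl, Matrix.mulVec_zero, smul_zero, zero_add, hcalBW, smul_zero]
end

section
/- Let T₀, T₁, R₀ᴬ, R₀ᴮ, R₀ᴰ, R₁ᴰ, T_γ, ρ ∈ ℝ with T₁ ≠ 0, h > 0, ε ∈ {−1, 1}. Define A = [[T₀+2T₁+R₀ᴬ, −T₀+2T₁−R₀ᴬ, 0], [−T₀+2T₁−R₀ᴬ, T₀+2T₁+R₀ᴬ, 0], [0, 0, 2(T₀−R₀ᴬ)]] (so R₁ᴬ = 0), D = [[T₀+2T₁+R₀ᴰ+4R₁ᴰ, −T₀+2T₁−R₀ᴰ, 0], [−T₀+2T₁−R₀ᴰ, T₀+2T₁+R₀ᴰ−4R₁ᴰ, 0], [0, 0, 2(T₀−R₀ᴰ)]], B = [[R₀ᴮ, −R₀ᴮ, 0], [−R₀ᴮ, R₀ᴮ, 0], [0,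 0, −2R₀ᴮ]], U = (T_γ, T_γ, 0), V = (0,0,0), W = (T_γ+ε·ρ·R₁ᴰ, T_γ−ε·ρ·R₁ᴰ, 0). Assume A, D, A − 3·B·D⁻¹·B and D − 3·B·A⁻¹·B are invertible. Then u = (T_γ/(4T₁))·(1, 1, 0), v₁ = (0, 0, 0), and v₂ is purely anisotropic: (v₂)₁ + (v₂)₂ = 0 and (v₂)₆ = 0. In words: such a laminate is a warp-free thermally stable laminate — a uniform temperature change produces an isotropic dilatation and no curvature, while a temperature gradient stretches the plate without change of surface. -/
open Matrix


/-- Structural predicate: block-diagonal with the (2,2) scalar block. -/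
def Pblk (M : Matrix (Fin 3) (Fin 3) ℝ) : Prop :=
  M 0 2 = 0 ∧ M 1 2 = 0 ∧ M 2 0 = 0 ∧ M 2 1 = 0

lemma Pblk_mul {M N : Matrix (Fin 3) (Fin 3) ℝ} (hM : Pblk M) (hN : Pblk N) :
    Pblk (M * N) := by
  obtain ⟨a, b, c, d⟩ := hM; obtain ⟨a', b', c', d'⟩ := hN
  refine ⟨?_, ?_, ?_, ?_⟩ <;>
    simp [Matrix.mul_apply, Fin.sum_univ_three, a, b, c, d, a', b', c', d']

lemma Pblk_inv {M : Matrix (Fin 3) (Fin 3) ℝ} (hM : Pblk M) : Pblk M⁻¹ := by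
  obtain ⟨a, b, c, d⟩ := hM
  rw [Matrix.inv_def, Matrix.adjugate_fin_three]
  refine ⟨?_, ?_, ?_, ?_⟩ <;> simp [a, b, c, d]

lemma inv_mulVec_eig {M : Matrix (Fin 3) (Fin 3) ℝ} (hM : IsUnit M.det)
    {v : Fin 3 → ℝ} {c : ℝ} (hc : c ≠ 0) (h : M.mulVec v = c • v) :
    M⁻¹.mulVec v = c⁻¹ • v := by
  have h2 : M⁻¹.mulVec (M.mulVec v) = M⁻¹.mulVec (c • v) := by rw [h]
  rw [Matrix.mulVec_mulVec, Matrix.nonsing_inv_mul M hM, Matrix.one_mulVec,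
    Matrix.mulVec_smul] at h2
  conv_rhs => rw [h2]
  rw [smul_smul, inv_mul_cancel₀ hc, one_smul]

theorem warp_free_thermally_stable
    (T₀ T₁ R₀A R₀B R₀D R₁D Tγ ρ : ℝ) (hT₁ : T₁ ≠ 0) (h : ℝ) (hh : 0 < h)
    (ε : ℝ) (hε : ε = -1 ∨ ε = 1) :
    let A : Matrix (Fin 3) (Fin 3) ℝ :=
      !![T₀ + 2*T₁ + R₀A, -T₀ + 2*T₁ - R₀A, 0;
         -T₀ + 2*T₁ - R₀A, T₀ + 2*T₁ + R₀A, 0;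
         0, 0, 2*(T₀ - R₀A)]
    let D : Matrix (Fin 3) (Fin 3) ℝ :=
      !![T₀ + 2*T₁ + R₀D + 4*R₁D, -T₀ + 2*T₁ - R₀D, 0;
         -T₀ + 2*T₁ - R₀D, T₀ + 2*T₁ + R₀D - 4*R₁D, 0;
         0, 0, 2*(T₀ - R₀D)]
    let B : Matrix (Fin 3) (Fin 3) ℝ :=
      !![R₀B, -R₀B, 0; -R₀B, R₀B, 0; 0, 0, -2*R₀B]
    let U : Fin 3 → ℝ := ![Tγ, Tγ, 0]
    let V : Fin 3 → ℝ := 0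
    let W : Fin 3 → ℝ := ![Tγ + ε * ρ * R₁D, Tγ - ε * ρ * R₁D, 0]
    let calA := (A - (3 : ℝ) • (B * D⁻¹ * B))⁻¹
    let calB := (-3 : ℝ) • (calA * B * D⁻¹)
    let calD := (D - (3 : ℝ) • (B * A⁻¹ * B))⁻¹
    let u := calA.mulVec U + calB.mulVec V
    let v₁ := (2 / h) • (calB.transpose.mulVec U + (3 : ℝ) • calD.mulVec V)
    let v₂ := (h / 6) • ((3 : ℝ) • calA.mulVec V + calB.mulVec W)
    IsUnit A.det → IsUnit D.det →
    IsUnit (A - (3 : ℝ) • (B * D⁻¹ * B)).det →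
    IsUnit (D - (3 : ℝ) • (B * A⁻¹ * B)).det →
      (u = (Tγ / (4 * T₁)) • (![1, 1, 0] : Fin 3 → ℝ) ∧
        v₁ = 0 ∧ v₂ 0 + v₂ 1 = 0 ∧ v₂ 2 = 0) := by
  intro A D B U V W calA calB calD u v₁ v₂ hA hD hM hN
  set e : Fin 3 → ℝ := ![1,1,0] with he
  have hBe : B.mulVec e = 0 := by
    simp only [B, he]
    ext i; fin_cases i <;> simp [Matrix.mulVec, dotProduct, Fin.sum_univ_three]
  have hAe : A.mulVec e = (4*T₁) • e := by
    simp only [A, he]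
    ext i; fin_cases i <;>
      simp [Matrix.mulVec, dotProduct, Fin.sum_univ_three] <;> ring
  have hAs : Aᵀ = A := by
    simp only [A]; ext i j; fin_cases i <;> fin_cases j <;> simp
  have hBs : Bᵀ = B := by
    simp only [B]; ext i j; fin_cases i <;> fin_cases j <;> simp
  have hDs : Dᵀ = D := by
    simp only [D]; ext i j; fin_cases i <;> fin_cases j <;> simp
  have hUe : U = Tγ • e := by
    simp only [U, he]; ext i; fin_cases i <;> simp
  have h4T : (4*T₁ : ℝ) ≠ 0 := mul_ne_zero (by norm_num) hT₁
  -- the matrix inside calA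
  have hMs : (A - (3 : ℝ) • (B * D⁻¹ * B))ᵀ = A - (3 : ℝ) • (B * D⁻¹ * B) := by
    rw [Matrix.transpose_sub, Matrix.transpose_smul, Matrix.transpose_mul,
      Matrix.transpose_mul, Matrix.transpose_nonsing_inv, hAs, hBs, hDs,
      Matrix.mul_assoc]
  have hMe : (A - (3 : ℝ) • (B * D⁻¹ * B)).mulVec e = (4*T₁) • e := by
    rw [Matrix.sub_mulVec, Matrix.smul_mulVec, ← Matrix.mulVec_mulVec,
      ← Matrix.mulVec_mulVec, hBe, Matrix.mulVec_zero, Matrix.mulVec_zero,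
      smul_zero, sub_zero, hAe]
  have hcalAe : calA.mulVec e = (4*T₁)⁻¹ • e := by
    simp only [calA]; exact inv_mulVec_eig hM h4T hMe
  have hcalAs : calAᵀ = calA := by
    simp only [calA]; rw [Matrix.transpose_nonsing_inv, hMs]
  -- calBᵀ *ᵥ e = 0
  have hcalBs : calBᵀ = (-3 : ℝ) • (D⁻¹ * B * calA) := by
    simp only [calB]
    rw [Matrix.transpose_smul, Matrix.transpose_mul, Matrix.transpose_mul,
      Matrix.transpose_nonsing_inv, hBs, hDs, hcalAs, Matrix.mul_assoc]
  have hcalBte : calBᵀ.mulVec e = 0 := by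
    rw [hcalBs, Matrix.smul_mulVec, ← Matrix.mulVec_mulVec,
      ← Matrix.mulVec_mulVec, hcalAe, Matrix.mulVec_smul, hBe, smul_zero,
      Matrix.mulVec_zero, smul_zero]
  -- conclusion 1 : u
  have hu : u = (Tγ / (4 * T₁)) • e := by
    simp only [u, V, Matrix.mulVec_zero, add_zero, hUe, Matrix.mulVec_smul,
      hcalAe, smul_smul, div_eq_mul_inv]
  -- conclusion 2 : v₁
  have hv₁ : v₁ = 0 := by
    simp only [v₁, V, Matrix.mulVec_zero, smul_zero, add_zero, hUe,
      Matrix.mulVec_smul, hcalBte, smul_zero]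
  -- structure facts for v₂
  have hPA : Pblk A := by refine ⟨?_, ?_, ?_, ?_⟩ <;> simp [A]
  have hPB : Pblk B := by refine ⟨?_, ?_, ?_, ?_⟩ <;> simp [B]
  have hPD : Pblk D := by refine ⟨?_, ?_, ?_, ?_⟩ <;> simp [D]
  have hPM : Pblk (A - (3 : ℝ) • (B * D⁻¹ * B)) := by
    have h1 := Pblk_mul (Pblk_mul hPB (Pblk_inv hPD)) hPB
    obtain ⟨a1, b1, c1, d1⟩ := h1
    obtain ⟨a2, b2, c2, d2⟩ := hPA
    refine ⟨?_, ?_, ?_, ?_⟩ <;>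
      simp [Matrix.sub_apply, a1, b1, c1, d1, a2, b2, c2, d2]
  have hPcalB : Pblk calB := by
    have h1 := Pblk_mul (Pblk_mul (Pblk_inv hPM) hPB) (Pblk_inv hPD)
    obtain ⟨a1, b1, c1, d1⟩ := h1
    simp only [calB, calA]
    exact ⟨by simp [a1], by simp [b1], by simp [c1], by simp [d1]⟩
  have hW2 : W 2 = 0 := by simp [W]
  have hy2 : (calB.mulVec W) 2 = 0 := by
    obtain ⟨a1, b1, c1, d1⟩ := hPcalB
    simp [Matrix.mulVec, dotProduct, Fin.sum_univ_three, c1, d1, hW2]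
  have hy01 : (calB.mulVec W) 0 + (calB.mulVec W) 1 = 0 := by
    have hd : e ⬝ᵥ (calB.mulVec W) = 0 := by
      rw [Matrix.dotProduct_mulVec, ← Matrix.mulVec_transpose, hcalBte,
        zero_dotProduct]
    simpa [he, dotProduct, Fin.sum_univ_three] using hd
  have hv₂ : ∀ i, v₂ i = (h/6) * (calB.mulVec W) i := by
    intro i
    simp [v₂, V, Matrix.mulVec_zero]
  refine ⟨by rw [hu, he], by rw [hv₁], ?_, ?_⟩
  · rw [hv₂ 0, hv₂ 1, ← mul_add, hy01, mul_zero]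
  · rw [hv₂ 2, hy2, mul_zero]
end

section
/- Let T₀, T₁, R₀ᴬ, R₁ᴬ, R₀ᴮ, R₀ᴰ, T_γ, ρ ∈ ℝ with T₁ ≠ 0, h > 0, ε ∈ {−1, 1}. Define A = [[T₀+2T₁+R₀ᴬ+4R₁ᴬ, −T₀+2T₁−R₀ᴬ, 0], [−T₀+2T₁−R₀ᴬ, T₀+2T₁+R₀ᴬ−4R₁ᴬ, 0], [0, 0, 2(T₀−R₀ᴬ)]], D = [[T₀+2T₁+R₀ᴰ, −T₀+2T₁−R₀ᴰ, 0], [−T₀+2T₁−R₀ᴰ, T₀+2T₁+R₀ᴰ, 0], [0, 0, 2(T₀−R₀ᴰ)]] (so R₁ᴰ = 0), B = [[R₀ᴮ, −R₀ᴮ, 0], [−R₀ᴮ, R₀ᴮ, 0], [0, 0, −2R₀ᴮ]], U = (T_γ+ε·ρ·R₁ᴬ, T_γ−ε·ρ·R₁ᴬ, 0), V = (0,0,0), W = (T_γ, T_γ, 0). Assume A, D, A − 3·B·D⁻¹·B and D − 3·B·A⁻¹·B are invertible. Then w = (T_γ/(4T₁))·(1, 1, 0), v₂ = (0, 0, 0),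 and v₁ is purely anisotropic: (v₁)₁ + (v₁)₂ = 0 and (v₁)₆ = 0. In words: such a laminate is an extension-free thermally stable laminate — a uniform temperature change warps the plate (without mean in-plane dilatation from coupling), while a temperature gradient produces an isotropic curvature and no in-plane stretching. -/
open Matrix

lemma eig_inv (M : Matrix (Fin 3) (Fin 3) ℝ) (hM : IsUnit M.det) {x : Fin 3 → ℝ}
    (hx : x ≠ 0) {c : ℝ} (hMx : M.mulVec x = c • x) :
    c ≠ 0 ∧ M⁻¹.mulVec x = c⁻¹ • x := by
  have key : c • M⁻¹.mulVec x = x := by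
    rw [← Matrix.mulVec_smul, ← hMx, Matrix.mulVec_mulVec, Matrix.nonsing_inv_mul M hM,
      Matrix.one_mulVec]
  have hc : c ≠ 0 := by
    intro h0
    apply hx
    rw [← key, h0, zero_smul]
  refine ⟨hc, ?_⟩
  calc M⁻¹.mulVec x = c⁻¹ • (c • M⁻¹.mulVec x) := by
        rw [smul_smul, inv_mul_cancel₀ hc, one_smul]
  _ = c⁻¹ • x := by rw [key]

theorem extension_free_thermally_stable
    (T₀ T₁ R₀A R₁A R₀B R₀D Tγ ρ : ℝ) (hT₁ : T₁ ≠ 0) (h : ℝ) (hh : 0 < h)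
    (ε : ℝ) (hε : ε = -1 ∨ ε = 1) :
    let A : Matrix (Fin 3) (Fin 3) ℝ :=
      !![T₀ + 2*T₁ + R₀A + 4*R₁A, -T₀ + 2*T₁ - R₀A, 0;
         -T₀ + 2*T₁ - R₀A, T₀ + 2*T₁ + R₀A - 4*R₁A, 0;
         0, 0, 2*(T₀ - R₀A)]
    let D : Matrix (Fin 3) (Fin 3) ℝ :=
      !![T₀ + 2*T₁ + R₀D, -T₀ + 2*T₁ - R₀D, 0;
         -T₀ + 2*T₁ - R₀D, T₀ + 2*T₁ + R₀D, 0;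
         0, 0, 2*(T₀ - R₀D)]
    let B : Matrix (Fin 3) (Fin 3) ℝ :=
      !![R₀B, -R₀B, 0; -R₀B, R₀B, 0; 0, 0, -2*R₀B]
    let U : Fin 3 → ℝ := ![Tγ + ε * ρ * R₁A, Tγ - ε * ρ * R₁A, 0]
    let V : Fin 3 → ℝ := 0
    let W : Fin 3 → ℝ := ![Tγ, Tγ, 0]
    let calA := (A - (3 : ℝ) • (B * D⁻¹ * B))⁻¹
    let calB := (-3 : ℝ) • (calA * B * D⁻¹)
    let calD := (D - (3 : ℝ) • (B * A⁻¹ * B))⁻¹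
    let v₁ := (2 / h) • (calB.transpose.mulVec U + (3 : ℝ) • calD.mulVec V)
    let v₂ := (h / 6) • ((3 : ℝ) • calA.mulVec V + calB.mulVec W)
    let w := calB.transpose.mulVec V + calD.mulVec W
    IsUnit A.det → IsUnit D.det →
    IsUnit (A - (3 : ℝ) • (B * D⁻¹ * B)).det →
    IsUnit (D - (3 : ℝ) • (B * A⁻¹ * B)).det →
      (w = (Tγ / (4 * T₁)) • (![1, 1, 0] : Fin 3 → ℝ) ∧
        v₂ = 0 ∧ v₁ 0 + v₁ 1 = 0 ∧ v₁ 2 = 0) := by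
  intro A D B U V W calA calB calD v₁ v₂ w hA hD hM₁ hM₂
  -- basic vectors
  have he0 : (![1,1,0] : Fin 3 → ℝ) ≠ 0 := by
    intro hc; have := congrFun hc 0; simp at this
  have hf0 : (![1,-1,0] : Fin 3 → ℝ) ≠ 0 := by
    intro hc; have := congrFun hc 0; simp at this
  have hg0 : (![0,0,1] : Fin 3 → ℝ) ≠ 0 := by
    intro hc; have := congrFun hc 2; simp at this
  -- concrete mulVec computations
  have hBe : B.mulVec ![1,1,0] = 0 := by
    funext i; fin_cases i <;>
      simp [B, Matrix.mulVec, dotProduct, Fin.sum_univ_three] <;> ring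
  have hDe : D.mulVec ![1,1,0] = (4*T₁) • ![1,1,0] := by
    funext i; fin_cases i <;>
      simp [D, Matrix.mulVec, dotProduct, Fin.sum_univ_three] <;> ring
  have hAg : A.mulVec ![0,0,1] = (2*(T₀-R₀A)) • ![0,0,1] := by
    funext i; fin_cases i <;>
      simp [A, Matrix.mulVec, dotProduct, Fin.sum_univ_three] <;> ring
  have hBg : B.mulVec ![0,0,1] = (-2*R₀B) • ![0,0,1] := by
    funext i; fin_cases i <;>
      simp [B, Matrix.mulVec, dotProduct, Fin.sum_univ_three] <;> ring
  have hDg : D.mulVec ![0,0,1] = (2*(T₀-R₀D)) • ![0,0,1] := by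
    funext i; fin_cases i <;>
      simp [D, Matrix.mulVec, dotProduct, Fin.sum_univ_three] <;> ring
  have hDf : D.mulVec ![1,-1,0] = (2*(T₀+R₀D)) • ![1,-1,0] := by
    funext i; fin_cases i <;>
      simp [D, Matrix.mulVec, dotProduct, Fin.sum_univ_three] <;> ring
  -- symmetry of matrices
  have hAsym : Aᵀ = A := by
    funext i j; fin_cases i <;> fin_cases j <;> simp [A]
  have hDsym : Dᵀ = D := by
    funext i j; fin_cases i <;> fin_cases j <;> simp [D]
  have hBsym : Bᵀ = B := by
    funext i j; fin_cases i <;> fin_cases j <;> simp [B]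
  -- inverse eigenvector facts for D
  obtain ⟨h4T, hDie⟩ := eig_inv D hD he0 hDe
  obtain ⟨hc2, hDig⟩ := eig_inv D hD hg0 hDg
  obtain ⟨hc1, hDif⟩ := eig_inv D hD hf0 hDf
  -- M₂ := D - 3 B A⁻¹ B
  have hBABe : (B * A⁻¹ * B).mulVec ![1,1,0] = 0 := by
    rw [← Matrix.mulVec_mulVec, ← Matrix.mulVec_mulVec, hBe, Matrix.mulVec_zero,
      Matrix.mulVec_zero]
  have hM₂e : (D - (3 : ℝ) • (B * A⁻¹ * B)).mulVec ![1,1,0] = (4*T₁) • ![1,1,0] := by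
    rw [Matrix.sub_mulVec, Matrix.smul_mulVec, hBABe, smul_zero, sub_zero, hDe]
  obtain ⟨-, hcalDe⟩ := eig_inv _ hM₂ he0 hM₂e
  -- W = Tγ • e
  have hW : W = Tγ • ![1,1,0] := by
    funext i; fin_cases i <;> simp [W]
  -- goal 1 : w
  have hw : w = (Tγ / (4 * T₁)) • (![1, 1, 0] : Fin 3 → ℝ) := by
    show calBᵀ.mulVec V + calD.mulVec W = _
    have hV : V = 0 := rfl
    rw [hV, Matrix.mulVec_zero, zero_add, hW, Matrix.mulVec_smul, hcalDe, smul_smul,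
      div_eq_mul_inv]
  -- goal 2 : v₂
  have hDieW : D⁻¹.mulVec W = (Tγ * (4*T₁)⁻¹) • ![1,1,0] := by
    rw [hW, Matrix.mulVec_smul, hDie, smul_smul]
  have hv₂ : v₂ = 0 := by
    show (h / 6) • ((3 : ℝ) • calA.mulVec V + calB.mulVec W) = 0
    have hV : V = 0 := rfl
    rw [hV, Matrix.mulVec_zero, smul_zero, zero_add]
    show (h / 6) • (((-3 : ℝ) • (calA * B * D⁻¹)).mulVec W) = 0
    rw [Matrix.smul_mulVec, ← Matrix.mulVec_mulVec, ← Matrix.mulVec_mulVec, hDieW,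
      Matrix.mulVec_smul, hBe, smul_zero, Matrix.mulVec_zero, smul_zero, smul_zero]
  -- symmetry of calA
  have hM₁sym : (A - (3 : ℝ) • (B * D⁻¹ * B))ᵀ = A - (3 : ℝ) • (B * D⁻¹ * B) := by
    rw [Matrix.transpose_sub, Matrix.transpose_smul, Matrix.transpose_mul, Matrix.transpose_mul,
      Matrix.transpose_nonsing_inv, hAsym, hBsym, hDsym, Matrix.mul_assoc]
  have hcalAsym : calAᵀ = calA := by
    show ((A - (3 : ℝ) • (B * D⁻¹ * B))⁻¹)ᵀ = _
    rw [Matrix.transpose_nonsing_inv, hM₁sym]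
  -- calA column facts
  have hBDBg : (B * D⁻¹ * B).mulVec ![0,0,1] =
      ((-2*R₀B) * (2*(T₀-R₀D))⁻¹ * (-2*R₀B)) • ![0,0,1] := by
    rw [← Matrix.mulVec_mulVec, ← Matrix.mulVec_mulVec, hBg, Matrix.mulVec_smul, hDig,
      Matrix.mulVec_smul, Matrix.mulVec_smul, hBg, smul_smul, smul_smul, mul_assoc]
  have hM₁g : (A - (3 : ℝ) • (B * D⁻¹ * B)).mulVec ![0,0,1] =
      (2*(T₀-R₀A) - 3 * ((-2*R₀B) * (2*(T₀-R₀D))⁻¹ * (-2*R₀B))) • ![0,0,1] := by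
    rw [Matrix.sub_mulVec, Matrix.smul_mulVec, hBDBg, hAg, smul_smul, ← sub_smul]
  obtain ⟨-, hcalAg⟩ := eig_inv _ hM₁ hg0 hM₁g
  have hcalA02 : calA 0 2 = 0 := by
    have := congrFun hcalAg 0
    simpa [Matrix.mulVec, dotProduct, Fin.sum_univ_three] using this
  have hcalA12 : calA 1 2 = 0 := by
    have := congrFun hcalAg 1
    simpa [Matrix.mulVec, dotProduct, Fin.sum_univ_three] using this
  have hcalA20 : calA 2 0 = 0 := by
    have := congrFun (congrFun hcalAsym 0) 2
    rw [Matrix.transpose_apply] at this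
    rw [this, hcalA02]
  have hcalA21 : calA 2 1 = 0 := by
    have := congrFun (congrFun hcalAsym 1) 2
    rw [Matrix.transpose_apply] at this
    rw [this, hcalA12]
  -- y := calA.mulVec U
  set y : Fin 3 → ℝ := calA.mulVec U with hydef
  have hy2 : y 2 = 0 := by
    show (calA.mulVec U) 2 = 0
    simp [Matrix.mulVec, dotProduct, Fin.sum_univ_three, hcalA20, hcalA21, U]
  have hBy : B.mulVec y = (R₀B * (y 0 - y 1)) • ![1,-1,0] := by
    funext i; fin_cases i <;>
      simp [B, Matrix.mulVec, dotProduct, Fin.sum_univ_three, hy2] <;> ring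
  -- transpose of calB
  have hcalBT : calBᵀ = (-3 : ℝ) • (D⁻¹ * (B * calA)) := by
    show ((-3 : ℝ) • (calA * B * D⁻¹))ᵀ = _
    rw [Matrix.transpose_smul, Matrix.transpose_mul, Matrix.transpose_mul,
      Matrix.transpose_nonsing_inv, hDsym, hBsym, hcalAsym]
  -- v₁
  have hv₁ : v₁ = (2/h * -3 * (R₀B * (y 0 - y 1)) * (2*(T₀+R₀D))⁻¹) • ![1,-1,0] := by
    show (2 / h) • (calBᵀ.mulVec U + (3 : ℝ) • calD.mulVec V) = _
    have hV : V = 0 := rfl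
    rw [hV, Matrix.mulVec_zero, smul_zero, add_zero, hcalBT, Matrix.smul_mulVec,
      ← Matrix.mulVec_mulVec, ← Matrix.mulVec_mulVec, ← hydef, hBy, Matrix.mulVec_smul,
      hDif, smul_smul, smul_smul, smul_smul]
  constructor
  · exact hw
  constructor
  · exact hv₂
  constructor
  · rw [hv₁]; simp
  · rw [hv₁]; simp
end

section
/- Let T₀, T₁, R₀ᴬ, R₁ᴬ, R₀ᴮ, R₀ᴰ, R₁ᴰ, T_γ, ρ ∈ ℝ, h > 0, ε ∈ {−1, 1}. Define A = [[T₀+2T₁+R₀ᴬ+4R₁ᴬ, −T₀+2T₁−R₀ᴬ, 0], [−T₀+2T₁−R₀ᴬ, T₀+2T₁+R₀ᴬ−4R₁ᴬ, 0], [0, 0, 2(T₀−R₀ᴬ)]], D the analogous matrix with (R₀ᴰ, R₁ᴰ), B = [[R₀ᴮ, −R₀ᴮ, 0], [−R₀ᴮ, R₀ᴮ, 0], [0, 0, −2R₀ᴮ]], U = (T_γ+ε·ρ·R₁ᴬ, T_γ−ε·ρ·R₁ᴬ, 0), V = (0,0,0), W = (T_γ+ε·ρ·R₁ᴰ, T_γ−ε·ρ·R₁ᴰ,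 0). Assume A, D, A − 3·B·D⁻¹·B and D − 3·B·A⁻¹·B are invertible. Then the isotropic parts of the compliance thermoelastic coupling tensors satisfy 12·((v₂)₁ + (v₂)₂) = h²·((v₁)₁ + (v₁)₂); that is, the ratio of the isotropic phases of v₂ and v₁ equals h²/12 and is independent of the material and of the laminate stiffnesses. -/
open Matrix
set_option maxHeartbeats 4000000

lemma det3 (p q r s : ℝ) :
    (!![p,q,0;q,r,0;0,0,s] : Matrix (Fin 3) (Fin 3) ℝ).det = (p*r - q*q)*s := by
  simp [Matrix.det_fin_three]; ring

lemma inv3 (p q r s : ℝ) (hΔ : p*r - q*q ≠ 0) (hs : s ≠ 0) :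
    (!![p,q,0;q,r,0;0,0,s] : Matrix (Fin 3) (Fin 3) ℝ)⁻¹ =
    !![r/(p*r-q*q), -q/(p*r-q*q), 0; -q/(p*r-q*q), p/(p*r-q*q), 0; 0,0,s⁻¹] := by
  have hΔ2 : p*r - q^2 ≠ 0 := by rwa [sq]
  have hΔ3 : -q^2 + p*r ≠ 0 := by rw [sq]; intro hz; apply hΔ; linarith
  apply Matrix.inv_eq_right_inv
  ext i j
  fin_cases i <;> fin_cases j <;>
    simp [Matrix.mul_apply, Fin.sum_univ_three, Matrix.one_apply] <;>
    field_simp <;> ring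

theorem isotropic_phases_ratio_v2_v1
    (T₀ T₁ R₀A R₁A R₀B R₀D R₁D Tγ ρ : ℝ) (h : ℝ) (hh : 0 < h)
    (ε : ℝ) (hε : ε = -1 ∨ ε = 1) :
    let A : Matrix (Fin 3) (Fin 3) ℝ :=
      !![T₀ + 2*T₁ + R₀A + 4*R₁A, -T₀ + 2*T₁ - R₀A, 0;
         -T₀ + 2*T₁ - R₀A, T₀ + 2*T₁ + R₀A - 4*R₁A, 0;
         0, 0, 2*(T₀ - R₀A)]
    let D : Matrix (Fin 3) (Fin 3) ℝ :=
      !![T₀ + 2*T₁ + R₀D + 4*R₁D, -T₀ + 2*T₁ - R₀D, 0;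
         -T₀ + 2*T₁ - R₀D, T₀ + 2*T₁ + R₀D - 4*R₁D, 0;
         0, 0, 2*(T₀ - R₀D)]
    let B : Matrix (Fin 3) (Fin 3) ℝ :=
      !![R₀B, -R₀B, 0; -R₀B, R₀B, 0; 0, 0, -2*R₀B]
    let U : Fin 3 → ℝ := ![Tγ + ε * ρ * R₁A, Tγ - ε * ρ * R₁A, 0]
    let V : Fin 3 → ℝ := 0
    let W : Fin 3 → ℝ := ![Tγ + ε * ρ * R₁D, Tγ - ε * ρ * R₁D, 0]
    let calA := (A - (3 : ℝ) • (B * D⁻¹ * B))⁻¹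
    let calB := (-3 : ℝ) • (calA * B * D⁻¹)
    let calD := (D - (3 : ℝ) • (B * A⁻¹ * B))⁻¹
    let v₁ := (2 / h) • (calB.transpose.mulVec U + (3 : ℝ) • calD.mulVec V)
    let v₂ := (h / 6) • ((3 : ℝ) • calA.mulVec V + calB.mulVec W)
    IsUnit A.det → IsUnit D.det →
    IsUnit (A - (3 : ℝ) • (B * D⁻¹ * B)).det →
    IsUnit (D - (3 : ℝ) • (B * A⁻¹ * B)).det →
      12 * (v₂ 0 + v₂ 1) = h ^ 2 * (v₁ 0 + v₁ 1) := by
  intro A D B U V W calA calB calD v₁ v₂ hA hD hM hN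
  have hDdet : (((T₀ + 2*T₁ + R₀D + 4*R₁D)*(T₀ + 2*T₁ + R₀D - 4*R₁D) - (-T₀ + 2*T₁ - R₀D)*(-T₀ + 2*T₁ - R₀D)) * (2*(T₀ - R₀D)) : ℝ) ≠ 0 := by
    rw [← det3]; exact isUnit_iff_ne_zero.mp hD
  have hΔD : (((T₀ + 2*T₁ + R₀D + 4*R₁D)*(T₀ + 2*T₁ + R₀D - 4*R₁D) - (-T₀ + 2*T₁ - R₀D)*(-T₀ + 2*T₁ - R₀D)) : ℝ) ≠ 0 := (mul_ne_zero_iff.mp hDdet).1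
  have hsD : ((2*(T₀ - R₀D)) : ℝ) ≠ 0 := (mul_ne_zero_iff.mp hDdet).2
  have hT0D : (T₀ - R₀D : ℝ) ≠ 0 := by
    intro hz; apply hsD; rw [hz]; ring
  have hDinv : D⁻¹ = !![(T₀ + 2*T₁ + R₀D - 4*R₁D)/((T₀ + 2*T₁ + R₀D + 4*R₁D)*(T₀ + 2*T₁ + R₀D - 4*R₁D) - (-T₀ + 2*T₁ - R₀D)*(-T₀ + 2*T₁ - R₀D)), -(-T₀ + 2*T₁ - R₀D)/((T₀ + 2*T₁ + R₀D + 4*R₁D)*(T₀ + 2*T₁ + R₀D - 4*R₁D) - (-T₀ + 2*T₁ - R₀D)*(-T₀ + 2*T₁ - R₀D)), 0;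
      -(-T₀ + 2*T₁ - R₀D)/((T₀ + 2*T₁ + R₀D + 4*R₁D)*(T₀ + 2*T₁ + R₀D - 4*R₁D) - (-T₀ + 2*T₁ - R₀D)*(-T₀ + 2*T₁ - R₀D)), (T₀ + 2*T₁ + R₀D + 4*R₁D)/((T₀ + 2*T₁ + R₀D + 4*R₁D)*(T₀ + 2*T₁ + R₀D - 4*R₁D) - (-T₀ + 2*T₁ - R₀D)*(-T₀ + 2*T₁ - R₀D)), 0; 0, 0, ((2*(T₀ - R₀D)) : ℝ)⁻¹] :=
    inv3 _ _ _ _ hΔD hsD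
  obtain ⟨dd, hdd⟩ : ∃ x : ℝ, x = ((T₀ + 2*T₁ + R₀D + 4*R₁D)*(T₀ + 2*T₁ + R₀D - 4*R₁D) - (-T₀ + 2*T₁ - R₀D)*(-T₀ + 2*T₁ - R₀D)) := ⟨_, rfl⟩
  rw [← hdd] at hDinv hΔD
  obtain ⟨pp, hpp⟩ : ∃ x : ℝ, x = T₀ + 2*T₁ + R₀A + 4*R₁A - 24*R₀B^2*T₁/dd := ⟨_, rfl⟩
  obtain ⟨qq, hqq⟩ : ∃ x : ℝ, x = -T₀ + 2*T₁ - R₀A + 24*R₀B^2*T₁/dd := ⟨_, rfl⟩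
  obtain ⟨rr, hrr⟩ : ∃ x : ℝ, x = T₀ + 2*T₁ + R₀A - 4*R₁A - 24*R₀B^2*T₁/dd := ⟨_, rfl⟩
  obtain ⟨ss, hss⟩ : ∃ x : ℝ, x = 2*(T₀ - R₀A) - 6*R₀B^2/(T₀ - R₀D) := ⟨_, rfl⟩
  have hMeq : A - (3 : ℝ) • (B * D⁻¹ * B) = !![pp, qq, 0; qq, rr, 0; 0, 0, ss] := by
    rw [hDinv, hpp, hqq, hrr, hss, hdd]
    ext i j
    fin_cases i <;> fin_cases j <;>
      simp [A, B, Matrix.mul_apply, Fin.sum_univ_three] <;>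
      field_simp <;> ring
  have hMdet : ((pp*rr - qq*qq) * ss : ℝ) ≠ 0 := by
    rw [← det3, ← hMeq]; exact isUnit_iff_ne_zero.mp hM
  have hΔM : ((pp*rr - qq*qq) : ℝ) ≠ 0 := (mul_ne_zero_iff.mp hMdet).1
  have hSM : (ss : ℝ) ≠ 0 := (mul_ne_zero_iff.mp hMdet).2
  have hcalA : calA = !![rr/(pp*rr - qq*qq), -qq/(pp*rr - qq*qq), 0;
      -qq/(pp*rr - qq*qq), pp/(pp*rr - qq*qq), 0; 0, 0, (ss : ℝ)⁻¹] := by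
    simp only [calA]; rw [hMeq]; exact inv3 pp qq rr ss hΔM hSM
  have hne : h ≠ 0 := ne_of_gt hh
  have hcond : (rr - pp) * (((T₀ + 2*T₁ + R₀D - 4*R₁D) + (-T₀ + 2*T₁ - R₀D)) * (Tγ + ε * ρ * R₁D) + (-(-T₀ + 2*T₁ - R₀D) - (T₀ + 2*T₁ + R₀D + 4*R₁D)) * (Tγ - ε * ρ * R₁D))
      = ((T₀ + 2*T₁ + R₀D - 4*R₁D) - (T₀ + 2*T₁ + R₀D + 4*R₁D)) * ((rr + qq) * (Tγ + ε * ρ * R₁A) + (-qq - pp) * (Tγ - ε * ρ * R₁A)) := by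
    rw [hpp, hqq, hrr]; ring
  have hX : (calA * B * D⁻¹).mulVec W 0 + (calA * B * D⁻¹).mulVec W 1
      = (calA * B * D⁻¹)ᵀ.mulVec U 0 + (calA * B * D⁻¹)ᵀ.mulVec U 1 := by
    rw [hcalA, hDinv]
    simp only [B, U, W]
    simp [Matrix.mulVec, Matrix.mul_apply, dotProduct, Fin.sum_univ_three,
      Matrix.transpose_apply]
    linear_combination (R₀B * (pp*rr - qq*qq)⁻¹ * dd⁻¹) * hcond
  have hv2 : 12 * (v₂ 0 + v₂ 1)
      = -6*h * ((calA * B * D⁻¹).mulVec W 0 + (calA * B * D⁻¹).mulVec W 1) := by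
    simp only [v₂, calB, V, Matrix.mulVec_zero, smul_zero, zero_add,
      Matrix.smul_mulVec, Pi.smul_apply, smul_eq_mul]
    ring
  have hv1 : h ^ 2 * (v₁ 0 + v₁ 1)
      = -6*h * ((calA * B * D⁻¹)ᵀ.mulVec U 0 + (calA * B * D⁻¹)ᵀ.mulVec U 1) := by
    simp only [v₁, calB, calD, V, Matrix.mulVec_zero, smul_zero, add_zero,
      Matrix.transpose_smul, Matrix.smul_mulVec, Pi.smul_apply, smul_eq_mul]
    field_simp
    ring
  rw [hv2, hv1, hX]
end

section
/- With the same data as in the previous setting — A, D orthotropic Kelvin matrices with polar parameters (T₀, T₁, R₀ᴬ, R₁ᴬ) and (T₀, T₁, R₀ᴰ, R₁ᴰ), B with only R₀ᴮ (R₁ᴮ = 0), U = (T_γ+ε·ρ·R₁ᴬ, T_γ−ε·ρ·R₁ᴬ, 0), V = (0,0,0), W = (T_γ+ε·ρ·R₁ᴰ, T_γ−ε·ρ·R₁ᴰ, 0), with A, D, A − 3·B·D⁻¹·B, D − 3·B·A⁻¹·B invertible — the compliance thermoelastic coupling tensors satisfy (v₁)₆ = 0, (v₂)₆ = 0, and (R₁ᴰ)²·((v₁)₁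 − (v₁)₂)² = (T₁)²·((v₁)₁ + (v₁)₂)² and (R₁ᴬ)²·((v₂)₁ − (v₂)₂)² = (T₁)²·((v₂)₁ + (v₂)₂)²; that is, the ratio between the anisotropic and isotropic phases of v₁ equals T₁/R₁ᴰ (depending only on the material and the bending stiffness), and that of v₂ equals T₁/R₁ᴬ (depending only on the material and the extension stiffness). -/
open Matrix


private lemma blockDet (g11 g12 g22 g33 : ℝ) :
    (!![g11, g12, 0; g12, g22, 0; 0, 0, g33] : Matrix (Fin 3) (Fin 3) ℝ).det
      = (g11*g22 - g12^2) * g33 := by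
  simp only [Matrix.det_fin_three, Matrix.cons_val', Matrix.cons_val_zero, Matrix.cons_val_one,
      Matrix.head_cons, Matrix.empty_val', Matrix.cons_val_fin_one, Matrix.head_fin_const,
      Matrix.of_apply, Matrix.cons_val_two, Matrix.tail_cons]
  ring

private lemma blockInv (g11 g12 g22 g33 : ℝ) (hk : g11*g22 - g12^2 ≠ 0) (h3 : g33 ≠ 0) :
    (!![g11, g12, 0; g12, g22, 0; 0, 0, g33] : Matrix (Fin 3) (Fin 3) ℝ)⁻¹
      = !![g22/(g11*g22 - g12^2), -g12/(g11*g22 - g12^2), 0;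
           -g12/(g11*g22 - g12^2), g11/(g11*g22 - g12^2), 0;
           0, 0, g33⁻¹] := by
  apply Matrix.inv_eq_right_inv
  ext i j
  fin_cases i <;> fin_cases j <;>
    simp only [Matrix.mul_apply, Fin.sum_univ_three, Matrix.cons_val', Matrix.cons_val_zero, Matrix.cons_val_one,
      Matrix.head_cons, Matrix.empty_val', Matrix.cons_val_fin_one, Matrix.head_fin_const,
      Matrix.of_apply, Matrix.cons_val_two, Matrix.tail_cons,
      Matrix.one_apply, Fin.mk.injEq] <;>
    norm_num <;> field_simp <;> ring

private lemma mulVecT (x11 x12 x22 x33 y11 y12 y22 y33 r u0 u1 : ℝ) :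
    (((-3:ℝ) • ((!![x11, x12, 0; x12, x22, 0; 0, 0, x33] : Matrix (Fin 3) (Fin 3) ℝ)
        * !![r, -r, 0; -r, r, 0; 0, 0, -2*r]
        * !![y11, y12, 0; y12, y22, 0; 0, 0, y33])).transpose).mulVec ![u0, u1, 0]
    = ![-3*r*(y11 - y12)*((x11 - x12)*u0 + (x12 - x22)*u1),
        -3*r*(y12 - y22)*((x11 - x12)*u0 + (x12 - x22)*u1), 0] := by
  funext k
  fin_cases k <;>
    simp [Matrix.mulVec, Matrix.transpose_apply, dotProduct, Fin.sum_univ_three,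
      Matrix.smul_apply, Matrix.mul_apply, Fin.isValue] <;>
    ring

private lemma mulVecN (x11 x12 x22 x33 y11 y12 y22 y33 r u0 u1 : ℝ) :
    ((-3:ℝ) • ((!![x11, x12, 0; x12, x22, 0; 0, 0, x33] : Matrix (Fin 3) (Fin 3) ℝ)
        * !![r, -r, 0; -r, r, 0; 0, 0, -2*r]
        * !![y11, y12, 0; y12, y22, 0; 0, 0, y33])).mulVec ![u0, u1, 0]
    = ![-3*r*(x11 - x12)*((y11 - y12)*u0 + (y12 - y22)*u1),
        -3*r*(x12 - x22)*((y11 - y12)*u0 + (y12 - y22)*u1), 0] := by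
  funext k
  fin_cases k <;>
    simp [Matrix.mulVec, dotProduct, Fin.sum_univ_three,
      Matrix.smul_apply, Matrix.mul_apply, Fin.isValue] <;>
    ring

set_option maxHeartbeats 1000000 in
theorem anisotropic_to_isotropic_phase_ratios
    (T₀ T₁ R₀A R₁A R₀B R₀D R₁D Tγ ρ : ℝ) (h : ℝ) (hh : 0 < h)
    (ε : ℝ) (hε : ε = -1 ∨ ε = 1) :
    let A : Matrix (Fin 3) (Fin 3) ℝ :=
      !![T₀ + 2*T₁ + R₀A + 4*R₁A, -T₀ + 2*T₁ - R₀A, 0;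
         -T₀ + 2*T₁ - R₀A, T₀ + 2*T₁ + R₀A - 4*R₁A, 0;
         0, 0, 2*(T₀ - R₀A)]
    let D : Matrix (Fin 3) (Fin 3) ℝ :=
      !![T₀ + 2*T₁ + R₀D + 4*R₁D, -T₀ + 2*T₁ - R₀D, 0;
         -T₀ + 2*T₁ - R₀D, T₀ + 2*T₁ + R₀D - 4*R₁D, 0;
         0, 0, 2*(T₀ - R₀D)]
    let B : Matrix (Fin 3) (Fin 3) ℝ :=
      !![R₀B, -R₀B, 0; -R₀B, R₀B, 0; 0, 0, -2*R₀B]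
    let U : Fin 3 → ℝ := ![Tγ + ε * ρ * R₁A, Tγ - ε * ρ * R₁A, 0]
    let V : Fin 3 → ℝ := 0
    let W : Fin 3 → ℝ := ![Tγ + ε * ρ * R₁D, Tγ - ε * ρ * R₁D, 0]
    let calA := (A - (3 : ℝ) • (B * D⁻¹ * B))⁻¹
    let calB := (-3 : ℝ) • (calA * B * D⁻¹)
    let calD := (D - (3 : ℝ) • (B * A⁻¹ * B))⁻¹
    let v₁ := (2 / h) • (calB.transpose.mulVec U + (3 : ℝ) • calD.mulVec V)
    let v₂ := (h / 6) • ((3 : ℝ) • calA.mulVec V + calB.mulVec W)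
    IsUnit A.det → IsUnit D.det →
    IsUnit (A - (3 : ℝ) • (B * D⁻¹ * B)).det →
    IsUnit (D - (3 : ℝ) • (B * A⁻¹ * B)).det →
      (v₁ 2 = 0 ∧ v₂ 2 = 0 ∧
        R₁D ^ 2 * (v₁ 0 - v₁ 1) ^ 2 = T₁ ^ 2 * (v₁ 0 + v₁ 1) ^ 2 ∧
        R₁A ^ 2 * (v₂ 0 - v₂ 1) ^ 2 = T₁ ^ 2 * (v₂ 0 + v₂ 1) ^ 2) := by
  intro A D B U V W calA calB calD v₁ v₂ hA hD hM hN
  have hdD : D.det ≠ 0 := hD.ne_zero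
  rw [show D.det = ((T₀+2*T₁+R₀D+4*R₁D)*(T₀+2*T₁+R₀D-4*R₁D) - (-T₀+2*T₁-R₀D)^2)
      * (2*(T₀-R₀D)) from blockDet _ _ _ _] at hdD
  have hkD : ((T₀+2*T₁+R₀D+4*R₁D)*(T₀+2*T₁+R₀D-4*R₁D) - (-T₀+2*T₁-R₀D)^2) ≠ 0 := left_ne_zero_of_mul hdD
  have hT0D : T₀ - R₀D ≠ 0 := by
    have h2 := right_ne_zero_of_mul hdD
    intro hcon; exact h2 (by rw [hcon]; ring)
  have hDinv : D⁻¹ = !![(T₀+2*T₁+R₀D-4*R₁D)/((T₀+2*T₁+R₀D+4*R₁D)*(T₀+2*T₁+R₀D-4*R₁D) - (-T₀+2*T₁-R₀D)^2), -(-T₀+2*T₁-R₀D)/((T₀+2*T₁+R₀D+4*R₁D)*(T₀+2*T₁+R₀D-4*R₁D) - (-T₀+2*T₁-R₀D)^2), 0;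
      -(-T₀+2*T₁-R₀D)/((T₀+2*T₁+R₀D+4*R₁D)*(T₀+2*T₁+R₀D-4*R₁D) - (-T₀+2*T₁-R₀D)^2), (T₀+2*T₁+R₀D+4*R₁D)/((T₀+2*T₁+R₀D+4*R₁D)*(T₀+2*T₁+R₀D-4*R₁D) - (-T₀+2*T₁-R₀D)^2), 0;
      0, 0, (2*(T₀-R₀D))⁻¹] :=
    blockInv _ _ _ _ hkD (by intro hcon; exact hT0D (by linarith))
  have hMeq : A - (3:ℝ) • (B * D⁻¹ * B) = !![(T₀+2*T₁+R₀A+4*R₁A - (24*R₀B^2*T₁/((T₀+2*T₁+R₀D+4*R₁D)*(T₀+2*T₁+R₀D-4*R₁D) - (-T₀+2*T₁-R₀D)^2))), (-T₀+2*T₁-R₀A + (24*R₀B^2*T₁/((T₀+2*T₁+R₀D+4*R₁D)*(T₀+2*T₁+R₀D-4*R₁D) - (-T₀+2*T₁-R₀D)^2))), 0; (-T₀+2*T₁-R₀A + (24*R₀B^2*T₁/((T₀+2*T₁+R₀D+4*R₁D)*(T₀+2*T₁+R₀D-4*R₁D) - (-T₀+2*T₁-R₀D)^2))), (T₀+2*T₁+R₀A-4*R₁A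 - (24*R₀B^2*T₁/((T₀+2*T₁+R₀D+4*R₁D)*(T₀+2*T₁+R₀D-4*R₁D) - (-T₀+2*T₁-R₀D)^2))), 0; 0, 0, (2*(T₀-R₀A) - 6*R₀B^2/(T₀-R₀D))] := by
    rw [hDinv]
    ext i j
    fin_cases i <;> fin_cases j <;>
      simp only [A, B, Matrix.sub_apply, Matrix.smul_apply, Matrix.mul_apply,
        Fin.sum_univ_three, Matrix.cons_val', Matrix.cons_val_zero, Matrix.cons_val_one,
      Matrix.head_cons, Matrix.empty_val', Matrix.cons_val_fin_one, Matrix.head_fin_const,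
      Matrix.of_apply, Matrix.cons_val_two, Matrix.tail_cons, smul_eq_mul] <;>
      norm_num <;> field_simp <;> ring
  have hdM : (A - (3:ℝ) • (B * D⁻¹ * B)).det ≠ 0 := hM.ne_zero
  rw [hMeq, blockDet] at hdM
  have hkM : ((T₀+2*T₁+R₀A+4*R₁A - (24*R₀B^2*T₁/((T₀+2*T₁+R₀D+4*R₁D)*(T₀+2*T₁+R₀D-4*R₁D) - (-T₀+2*T₁-R₀D)^2)))*(T₀+2*T₁+R₀A-4*R₁A - (24*R₀B^2*T₁/((T₀+2*T₁+R₀D+4*R₁D)*(T₀+2*T₁+R₀D-4*R₁D) - (-T₀+2*T₁-R₀D)^2))) - (-T₀+2*T₁-R₀A + (24*R₀B^2*T₁/((T₀+2*T₁+R₀D+4*R₁D)*(T₀+2*T₁+R₀D-4*R₁D) - (-T₀+2*T₁-R₀D)^2)))^2) ≠ 0 := left_ne_zero_of_mul hdM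
  have hm33 : (2*(T₀-R₀A) - 6*R₀B^2/(T₀-R₀D)) ≠ 0 := right_ne_zero_of_mul hdM
  have hMinv : (A - (3:ℝ) • (B * D⁻¹ * B))⁻¹ =
      !![(T₀+2*T₁+R₀A-4*R₁A - (24*R₀B^2*T₁/((T₀+2*T₁+R₀D+4*R₁D)*(T₀+2*T₁+R₀D-4*R₁D) - (-T₀+2*T₁-R₀D)^2)))/((T₀+2*T₁+R₀A+4*R₁A - (24*R₀B^2*T₁/((T₀+2*T₁+R₀D+4*R₁D)*(T₀+2*T₁+R₀D-4*R₁D) - (-T₀+2*T₁-R₀D)^2)))*(T₀+2*T₁+R₀A-4*R₁A - (24*R₀B^2*T₁/((T₀+2*T₁+R₀D+4*R₁D)*(T₀+2*T₁+R₀D-4*R₁D) - (-T₀+2*T₁-R₀D)^2))) - (-T₀+2*T₁-R₀A + (24*R₀B^2*T₁/((T₀+2*T₁+R₀D+4*R₁D)*(T₀+2*T₁+R₀D-4*R₁D) - (-T₀+2*T₁-R₀D)^2)))^2), -(-T₀+2*T₁-R₀A + (24*R₀B^2*T₁/((T₀+2*T₁+R₀D+4*R₁D)*(T₀+2*T₁+R₀D-4*R₁D)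 - (-T₀+2*T₁-R₀D)^2)))/((T₀+2*T₁+R₀A+4*R₁A - (24*R₀B^2*T₁/((T₀+2*T₁+R₀D+4*R₁D)*(T₀+2*T₁+R₀D-4*R₁D) - (-T₀+2*T₁-R₀D)^2)))*(T₀+2*T₁+R₀A-4*R₁A - (24*R₀B^2*T₁/((T₀+2*T₁+R₀D+4*R₁D)*(T₀+2*T₁+R₀D-4*R₁D) - (-T₀+2*T₁-R₀D)^2))) - (-T₀+2*T₁-R₀A + (24*R₀B^2*T₁/((T₀+2*T₁+R₀D+4*R₁D)*(T₀+2*T₁+R₀D-4*R₁D) - (-T₀+2*T₁-R₀D)^2)))^2), 0; -(-T₀+2*T₁-R₀A + (24*R₀B^2*T₁/((T₀+2*T₁+R₀D+4*R₁D)*(T₀+2*T₁+R₀D-4*R₁D) - (-T₀+2*T₁-R₀D)^2)))/((T₀+2*T₁+R₀A+4*R₁A - (24*R₀B^2*T₁/((T₀+2*T₁+R₀D+4*R₁D)*(T₀+2*T₁+R₀D-4*R₁D) - (-T₀+2*T₁-R₀D)^2)))*(T₀+2*T₁+R₀A-4*R₁A - (24*R₀B^2*T₁/((T₀+2*T₁+R₀D+4*R₁D)*(T₀+2*T₁+R₀D-4*R₁D)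 - (-T₀+2*T₁-R₀D)^2))) - (-T₀+2*T₁-R₀A + (24*R₀B^2*T₁/((T₀+2*T₁+R₀D+4*R₁D)*(T₀+2*T₁+R₀D-4*R₁D) - (-T₀+2*T₁-R₀D)^2)))^2), (T₀+2*T₁+R₀A+4*R₁A - (24*R₀B^2*T₁/((T₀+2*T₁+R₀D+4*R₁D)*(T₀+2*T₁+R₀D-4*R₁D) - (-T₀+2*T₁-R₀D)^2)))/((T₀+2*T₁+R₀A+4*R₁A - (24*R₀B^2*T₁/((T₀+2*T₁+R₀D+4*R₁D)*(T₀+2*T₁+R₀D-4*R₁D) - (-T₀+2*T₁-R₀D)^2)))*(T₀+2*T₁+R₀A-4*R₁A - (24*R₀B^2*T₁/((T₀+2*T₁+R₀D+4*R₁D)*(T₀+2*T₁+R₀D-4*R₁D) - (-T₀+2*T₁-R₀D)^2))) - (-T₀+2*T₁-R₀A + (24*R₀B^2*T₁/((T₀+2*T₁+R₀D+4*R₁D)*(T₀+2*T₁+R₀D-4*R₁D) - (-T₀+2*T₁-R₀D)^2)))^2), 0; 0, 0, ((2*(T₀-R₀A) - 6*R₀B^2/(T₀-R₀D)))⁻¹]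 := by
    rw [hMeq]
    exact blockInv _ _ _ _ hkM hm33
  have hv1 : ∃ c : ℝ, v₁ 0 = c * (4*(T₁-R₁D)) ∧ v₁ 1 = -(c * (4*(T₁+R₁D))) ∧ v₁ 2 = 0 := by
    refine ⟨(2/h) * (-3*R₀B) * (((T₀+2*T₁+R₀D+4*R₁D)*(T₀+2*T₁+R₀D-4*R₁D) - (-T₀+2*T₁-R₀D)^2))⁻¹ *
      ((((T₀+2*T₁+R₀A-4*R₁A - (24*R₀B^2*T₁/((T₀+2*T₁+R₀D+4*R₁D)*(T₀+2*T₁+R₀D-4*R₁D) - (-T₀+2*T₁-R₀D)^2)))/((T₀+2*T₁+R₀A+4*R₁A - (24*R₀B^2*T₁/((T₀+2*T₁+R₀D+4*R₁D)*(T₀+2*T₁+R₀D-4*R₁D) - (-T₀+2*T₁-R₀D)^2)))*(T₀+2*T₁+R₀A-4*R₁A - (24*R₀B^2*T₁/((T₀+2*T₁+R₀D+4*R₁D)*(T₀+2*T₁+R₀D-4*R₁D) - (-T₀+2*T₁-R₀D)^2))) - (-T₀+2*T₁-R₀A + (24*R₀B^2*T₁/((T₀+2*T₁+R₀D+4*R₁D)*(T₀+2*T₁+R₀D-4*R₁D)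 - (-T₀+2*T₁-R₀D)^2)))^2) - -(-T₀+2*T₁-R₀A + (24*R₀B^2*T₁/((T₀+2*T₁+R₀D+4*R₁D)*(T₀+2*T₁+R₀D-4*R₁D) - (-T₀+2*T₁-R₀D)^2)))/((T₀+2*T₁+R₀A+4*R₁A - (24*R₀B^2*T₁/((T₀+2*T₁+R₀D+4*R₁D)*(T₀+2*T₁+R₀D-4*R₁D) - (-T₀+2*T₁-R₀D)^2)))*(T₀+2*T₁+R₀A-4*R₁A - (24*R₀B^2*T₁/((T₀+2*T₁+R₀D+4*R₁D)*(T₀+2*T₁+R₀D-4*R₁D) - (-T₀+2*T₁-R₀D)^2))) - (-T₀+2*T₁-R₀A + (24*R₀B^2*T₁/((T₀+2*T₁+R₀D+4*R₁D)*(T₀+2*T₁+R₀D-4*R₁D) - (-T₀+2*T₁-R₀D)^2)))^2))) * (Tγ + ε*ρ*R₁A) + ((-(-T₀+2*T₁-R₀A + (24*R₀B^2*T₁/((T₀+2*T₁+R₀D+4*R₁D)*(T₀+2*T₁+R₀D-4*R₁D) - (-T₀+2*T₁-R₀D)^2)))/((T₀+2*T₁+R₀A+4*R₁A - (24*R₀B^2*T₁/((T₀+2*T₁+R₀D+4*R₁D)*(T₀+2*T₁+R₀D-4*R₁D)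 - (-T₀+2*T₁-R₀D)^2)))*(T₀+2*T₁+R₀A-4*R₁A - (24*R₀B^2*T₁/((T₀+2*T₁+R₀D+4*R₁D)*(T₀+2*T₁+R₀D-4*R₁D) - (-T₀+2*T₁-R₀D)^2))) - (-T₀+2*T₁-R₀A + (24*R₀B^2*T₁/((T₀+2*T₁+R₀D+4*R₁D)*(T₀+2*T₁+R₀D-4*R₁D) - (-T₀+2*T₁-R₀D)^2)))^2) - (T₀+2*T₁+R₀A+4*R₁A - (24*R₀B^2*T₁/((T₀+2*T₁+R₀D+4*R₁D)*(T₀+2*T₁+R₀D-4*R₁D) - (-T₀+2*T₁-R₀D)^2)))/((T₀+2*T₁+R₀A+4*R₁A - (24*R₀B^2*T₁/((T₀+2*T₁+R₀D+4*R₁D)*(T₀+2*T₁+R₀D-4*R₁D) - (-T₀+2*T₁-R₀D)^2)))*(T₀+2*T₁+R₀A-4*R₁A - (24*R₀B^2*T₁/((T₀+2*T₁+R₀D+4*R₁D)*(T₀+2*T₁+R₀D-4*R₁D) - (-T₀+2*T₁-R₀D)^2))) - (-T₀+2*T₁-R₀A + (24*R₀B^2*T₁/((T₀+2*T₁+R₀D+4*R₁D)*(T₀+2*T₁+R₀D-4*R₁D)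 - (-T₀+2*T₁-R₀D)^2)))^2))) * (Tγ - ε*ρ*R₁A)), ?_, ?_, ?_⟩ <;>
    · simp only [v₁, calB, calA, calD, V, B, U, Matrix.mulVec_zero, smul_zero, add_zero,
        Pi.smul_apply, smul_eq_mul]
      rw [hMinv, hDinv, mulVecT]
      simp only [Matrix.cons_val_zero, Matrix.cons_val_one, Matrix.head_cons,
        Matrix.cons_val_two, Matrix.tail_cons]
      ring
  have hv2 : ∃ c : ℝ, v₂ 0 = c * (4*(T₁-R₁A)) ∧ v₂ 1 = -(c * (4*(T₁+R₁A))) ∧ v₂ 2 = 0 := by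
    refine ⟨(h/6) * (-3*R₀B) * (((T₀+2*T₁+R₀A+4*R₁A - (24*R₀B^2*T₁/((T₀+2*T₁+R₀D+4*R₁D)*(T₀+2*T₁+R₀D-4*R₁D) - (-T₀+2*T₁-R₀D)^2)))*(T₀+2*T₁+R₀A-4*R₁A - (24*R₀B^2*T₁/((T₀+2*T₁+R₀D+4*R₁D)*(T₀+2*T₁+R₀D-4*R₁D) - (-T₀+2*T₁-R₀D)^2))) - (-T₀+2*T₁-R₀A + (24*R₀B^2*T₁/((T₀+2*T₁+R₀D+4*R₁D)*(T₀+2*T₁+R₀D-4*R₁D) - (-T₀+2*T₁-R₀D)^2)))^2))⁻¹ *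
      ((((T₀+2*T₁+R₀D-4*R₁D)/((T₀+2*T₁+R₀D+4*R₁D)*(T₀+2*T₁+R₀D-4*R₁D) - (-T₀+2*T₁-R₀D)^2) - -(-T₀+2*T₁-R₀D)/((T₀+2*T₁+R₀D+4*R₁D)*(T₀+2*T₁+R₀D-4*R₁D) - (-T₀+2*T₁-R₀D)^2))) * (Tγ + ε*ρ*R₁D)
        + ((-(-T₀+2*T₁-R₀D)/((T₀+2*T₁+R₀D+4*R₁D)*(T₀+2*T₁+R₀D-4*R₁D) - (-T₀+2*T₁-R₀D)^2) - (T₀+2*T₁+R₀D+4*R₁D)/((T₀+2*T₁+R₀D+4*R₁D)*(T₀+2*T₁+R₀D-4*R₁D) - (-T₀+2*T₁-R₀D)^2))) * (Tγ - ε*ρ*R₁D)), ?_, ?_, ?_⟩ <;>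
    · simp only [v₂, calB, calA, calD, V, B, W, Matrix.mulVec_zero, smul_zero, zero_add,
        Pi.smul_apply, smul_eq_mul]
      rw [hMinv, hDinv, mulVecN]
      simp only [Matrix.cons_val_zero, Matrix.cons_val_one, Matrix.head_cons,
        Matrix.cons_val_two, Matrix.tail_cons]
      ring
  obtain ⟨c1, e10, e11, e12⟩ := hv1
  obtain ⟨c2, e20, e21, e22⟩ := hv2
  exact ⟨e12, e22, by rw [e10, e11]; ring, by rw [e20, e21]; ring⟩
end

section
/- Let T₀, T₁, R₀ᴬ, R₀ᴰ, R₁ᴮ, T_γ, ρ ∈ ℝ, h > 0, ε ∈ {−1, 1}, with (R₀ᴬ+T₀)·T₁ − 6·(R₁ᴮ)² ≠ 0 and (R₀ᴰ+T₀)·T₁ − 6·(R₁ᴮ)² ≠ 0. Define A = [[T₀+2T₁+R₀ᴬ, −T₀+2T₁−R₀ᴬ, 0], [−T₀+2T₁−R₀ᴬ, T₀+2T₁+R₀ᴬ, 0], [0, 0, 2(T₀−R₀ᴬ)]], D the same with R₀ᴰ, B = [[4R₁ᴮ, 0, 0], [0, −4R₁ᴮ, 0], [0, 0, 0]], U = W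 = (T_γ, T_γ, 0), V = (ε·ρ·R₁ᴮ, −ε·ρ·R₁ᴮ, 0). Assume A, D, A − 3·B·D⁻¹·B and D − 3·B·A⁻¹·B are invertible. Then: u = t^u·(1,1,0) with t^u = ((R₀ᴰ+T₀)·T_γ − 6·ε·(R₁ᴮ)²·ρ)/(4·((R₀ᴰ+T₀)·T₁ − 6·(R₁ᴮ)²)); w = t^w·(1,1,0) with t^w = ((R₀ᴬ+T₀)·T_γ − 6·ε·(R₁ᴮ)²·ρ)/(4·((R₀ᴬ+T₀)·T₁ − 6·(R₁ᴮ)²)); and v₁ and v₂ are purely anisotropic: (v₁)₁ + (v₁)₂ = 0, (v₁)₆ = 0, (v₂)₁ + (v₂)₂ = 0, (v₂)₆ = 0. In words: for a coupled laminate with R₁ᴬ = R₁ᴰ = R₀ᴮ = 0 and V ≠ O (e.g. an antisymmetric balanced cross-ply laminate), the thermal expansion and curvature compliance tensors u and w are isotropic while the coupling tensors v₁ and v₂ are purely anisotropic. -/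
open Matrix

set_option maxHeartbeats 4000000 in
private lemma aux_inv (T₀ T₁ R₀ : ℝ) (hT₁ : T₁ ≠ 0) (hp : T₀ + R₀ ≠ 0) (hm : T₀ - R₀ ≠ 0) :
    (!![T₀ + 2*T₁ + R₀, -T₀ + 2*T₁ - R₀, 0;
        -T₀ + 2*T₁ - R₀, T₀ + 2*T₁ + R₀, 0;
        0, 0, 2*(T₀ - R₀)] : Matrix (Fin 3) (Fin 3) ℝ)⁻¹ =
    !![(T₀+2*T₁+R₀)/(8*T₁*(T₀+R₀)), -(-T₀+2*T₁-R₀)/(8*T₁*(T₀+R₀)), 0;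
       -(-T₀+2*T₁-R₀)/(8*T₁*(T₀+R₀)), (T₀+2*T₁+R₀)/(8*T₁*(T₀+R₀)), 0;
       0, 0, 1/(2*(T₀-R₀))] := by
  apply Matrix.inv_eq_right_inv
  ext i j
  fin_cases i <;> fin_cases j <;>
    (simp [Matrix.mul_apply, Fin.sum_univ_three, Matrix.one_apply];
     try field_simp;
     try ring)

set_option maxHeartbeats 16000000 in
private lemma aux_calA (T₀ T₁ Ra Rd r : ℝ) (hT₁ : T₁ ≠ 0)
    (hpd : T₀ + Rd ≠ 0) (hmd : T₀ - Rd ≠ 0) (hma : T₀ - Ra ≠ 0)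
    (he1 : (Ra + T₀) * T₁ - 6 * r ^ 2 ≠ 0) (he2 : (Rd + T₀) * T₁ - 6 * r ^ 2 ≠ 0) :
    (!![T₀ + 2*T₁ + Ra, -T₀ + 2*T₁ - Ra, 0;
        -T₀ + 2*T₁ - Ra, T₀ + 2*T₁ + Ra, 0;
        0, 0, 2*(T₀ - Ra)] -
      (3:ℝ) • (!![4*r, 0, 0; 0, -4*r, 0; 0, 0, 0] *
        (!![T₀ + 2*T₁ + Rd, -T₀ + 2*T₁ - Rd, 0;
            -T₀ + 2*T₁ - Rd, T₀ + 2*T₁ + Rd, 0;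
            0, 0, 2*(T₀ - Rd)] : Matrix (Fin 3) (Fin 3) ℝ)⁻¹ *
        !![4*r, 0, 0; 0, -4*r, 0; 0, 0, 0]))⁻¹ =
    !![(T₀+Rd)/(8*((Rd+T₀)*T₁-6*r^2)) + T₁/(4*((Ra+T₀)*T₁-6*r^2)),
       (T₀+Rd)/(8*((Rd+T₀)*T₁-6*r^2)) - T₁/(4*((Ra+T₀)*T₁-6*r^2)), 0;
       (T₀+Rd)/(8*((Rd+T₀)*T₁-6*r^2)) - T₁/(4*((Ra+T₀)*T₁-6*r^2)),
       (T₀+Rd)/(8*((Rd+T₀)*T₁-6*r^2)) + T₁/(4*((Ra+T₀)*T₁-6*r^2)), 0;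
       0, 0, 1/(2*(T₀-Ra))] := by
  rw [aux_inv _ _ _ hT₁ hpd hmd]
  have he1' : T₁ * (Ra + T₀) - r ^ 2 * 6 ≠ 0 := by
    intro hc; apply he1; linear_combination hc
  have he2' : T₁ * (Rd + T₀) - r ^ 2 * 6 ≠ 0 := by
    intro hc; apply he2; linear_combination hc
  apply Matrix.inv_eq_right_inv
  ext i j
  fin_cases i <;> fin_cases j <;>
    (simp [Matrix.mul_apply, Fin.sum_univ_three, Matrix.one_apply,
       Matrix.sub_apply, Matrix.smul_apply];
     try field_simp;
     try ring)

set_option maxHeartbeats 16000000 in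
private lemma aux_calB (T₀ T₁ Ra Rd r : ℝ) (hT₁ : T₁ ≠ 0)
    (hpd : T₀ + Rd ≠ 0) (hmd : T₀ - Rd ≠ 0) (hma : T₀ - Ra ≠ 0)
    (he1 : (Ra + T₀) * T₁ - 6 * r ^ 2 ≠ 0) (he2 : (Rd + T₀) * T₁ - 6 * r ^ 2 ≠ 0) :
    (-3 : ℝ) •
      (!![(T₀+Rd)/(8*((Rd+T₀)*T₁-6*r^2)) + T₁/(4*((Ra+T₀)*T₁-6*r^2)),
          (T₀+Rd)/(8*((Rd+T₀)*T₁-6*r^2)) - T₁/(4*((Ra+T₀)*T₁-6*r^2)), 0;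
          (T₀+Rd)/(8*((Rd+T₀)*T₁-6*r^2)) - T₁/(4*((Ra+T₀)*T₁-6*r^2)),
          (T₀+Rd)/(8*((Rd+T₀)*T₁-6*r^2)) + T₁/(4*((Ra+T₀)*T₁-6*r^2)), 0;
          0, 0, 1/(2*(T₀-Ra))] *
        !![4*r, 0, 0; 0, -4*r, 0; 0, 0, 0] *
        !![(T₀+2*T₁+Rd)/(8*T₁*(T₀+Rd)), -(-T₀+2*T₁-Rd)/(8*T₁*(T₀+Rd)), 0;
           -(-T₀+2*T₁-Rd)/(8*T₁*(T₀+Rd)), (T₀+2*T₁+Rd)/(8*T₁*(T₀+Rd)), 0;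
           0, 0, 1/(2*(T₀-Rd))]) =
    !![-(3*r/4)*(1/((Ra+T₀)*T₁-6*r^2) + 1/((Rd+T₀)*T₁-6*r^2)),
       -(3*r/4)*(1/((Ra+T₀)*T₁-6*r^2) - 1/((Rd+T₀)*T₁-6*r^2)), 0;
       (3*r/4)*(1/((Ra+T₀)*T₁-6*r^2) - 1/((Rd+T₀)*T₁-6*r^2)),
       (3*r/4)*(1/((Ra+T₀)*T₁-6*r^2) + 1/((Rd+T₀)*T₁-6*r^2)), 0;
       0, 0, 0] := by
  ext i j
  fin_cases i <;> fin_cases j <;>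
    (simp [Matrix.mul_apply, Fin.sum_univ_three, Matrix.smul_apply,
       Matrix.vecHead, Matrix.vecTail];
     try field_simp;
     try ring)

set_option maxHeartbeats 16000000 in
theorem cross_ply_coupled_laminate_thermoelastic
    (T₀ T₁ R₀A R₀D R₁B Tγ ρ : ℝ) (h : ℝ) (hh : 0 < h)
    (ε : ℝ) (hε : ε = -1 ∨ ε = 1)
    (hden1 : (R₀A + T₀) * T₁ - 6 * R₁B ^ 2 ≠ 0)
    (hden2 : (R₀D + T₀) * T₁ - 6 * R₁B ^ 2 ≠ 0) :
    let A : Matrix (Fin 3) (Fin 3) ℝ :=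
      !![T₀ + 2*T₁ + R₀A, -T₀ + 2*T₁ - R₀A, 0;
         -T₀ + 2*T₁ - R₀A, T₀ + 2*T₁ + R₀A, 0;
         0, 0, 2*(T₀ - R₀A)]
    let D : Matrix (Fin 3) (Fin 3) ℝ :=
      !![T₀ + 2*T₁ + R₀D, -T₀ + 2*T₁ - R₀D, 0;
         -T₀ + 2*T₁ - R₀D, T₀ + 2*T₁ + R₀D, 0;
         0, 0, 2*(T₀ - R₀D)]
    let B : Matrix (Fin 3) (Fin 3) ℝ :=
      !![4*R₁B, 0, 0; 0, -4*R₁B, 0; 0, 0, 0]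
    let U : Fin 3 → ℝ := ![Tγ, Tγ, 0]
    let W : Fin 3 → ℝ := ![Tγ, Tγ, 0]
    let V : Fin 3 → ℝ := ![ε * ρ * R₁B, -(ε * ρ * R₁B), 0]
    let calA := (A - (3 : ℝ) • (B * D⁻¹ * B))⁻¹
    let calB := (-3 : ℝ) • (calA * B * D⁻¹)
    let calD := (D - (3 : ℝ) • (B * A⁻¹ * B))⁻¹
    let u := calA.mulVec U + calB.mulVec V
    let v₁ := (2 / h) • (calB.transpose.mulVec U + (3 : ℝ) • calD.mulVec V)
    let v₂ := (h / 6) • ((3 : ℝ) • calA.mulVec V + calB.mulVec W)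
    let w := calB.transpose.mulVec V + calD.mulVec W
    IsUnit A.det → IsUnit D.det →
    IsUnit (A - (3 : ℝ) • (B * D⁻¹ * B)).det →
    IsUnit (D - (3 : ℝ) • (B * A⁻¹ * B)).det →
      (u = (((R₀D + T₀) * Tγ - 6 * ε * R₁B ^ 2 * ρ) /
          (4 * ((R₀D + T₀) * T₁ - 6 * R₁B ^ 2))) • (![1, 1, 0] : Fin 3 → ℝ) ∧
        w = (((R₀A + T₀) * Tγ - 6 * ε * R₁B ^ 2 * ρ) /
          (4 * ((R₀A + T₀) * T₁ - 6 * R₁B ^ 2))) • (![1, 1, 0] : Fin 3 → ℝ) ∧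
        v₁ 0 + v₁ 1 = 0 ∧ v₁ 2 = 0 ∧ v₂ 0 + v₂ 1 = 0 ∧ v₂ 2 = 0) := by
  intro A D B U W V calA calB calD u v₁ v₂ w hA hD hMA hMD
  have hdA : A.det ≠ 0 := hA.ne_zero
  have hdD : D.det ≠ 0 := hD.ne_zero
  have hdetA : A.det = 16 * T₁ * (T₀ + R₀A) * (T₀ - R₀A) := by
    show Matrix.det _ = _
    rw [Matrix.det_fin_three]
    simp [A]
    ring
  have hdetD : D.det = 16 * T₁ * (T₀ + R₀D) * (T₀ - R₀D) := by
    show Matrix.det _ = _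
    rw [Matrix.det_fin_three]
    simp [D]
    ring
  rw [hdetA] at hdA
  rw [hdetD] at hdD
  have hT₁ : T₁ ≠ 0 := by intro hc; apply hdA; rw [hc]; ring
  have hApl : T₀ + R₀A ≠ 0 := by
    intro hc; apply hdA
    rw [show (16:ℝ) * T₁ * (T₀ + R₀A) * (T₀ - R₀A)
        = 16 * T₁ * (T₀ - R₀A) * (T₀ + R₀A) by ring, hc, mul_zero]
  have hAmi : T₀ - R₀A ≠ 0 := by intro hc; apply hdA; rw [hc, mul_zero]
  have hDpl : T₀ + R₀D ≠ 0 := by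
    intro hc; apply hdD
    rw [show (16:ℝ) * T₁ * (T₀ + R₀D) * (T₀ - R₀D)
        = 16 * T₁ * (T₀ - R₀D) * (T₀ + R₀D) by ring, hc, mul_zero]
  have hDmi : T₀ - R₀D ≠ 0 := by intro hc; apply hdD; rw [hc, mul_zero]
  clear hA hD hMA hMD hdA hdD hdetA hdetD
  have hDinv : D⁻¹ =
      !![(T₀+2*T₁+R₀D)/(8*T₁*(T₀+R₀D)), -(-T₀+2*T₁-R₀D)/(8*T₁*(T₀+R₀D)), 0;
         -(-T₀+2*T₁-R₀D)/(8*T₁*(T₀+R₀D)), (T₀+2*T₁+R₀D)/(8*T₁*(T₀+R₀D)), 0;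
         0, 0, 1/(2*(T₀-R₀D))] := aux_inv T₀ T₁ R₀D hT₁ hDpl hDmi
  have hcalA : calA =
      !![(T₀+R₀D)/(8*((R₀D+T₀)*T₁-6*R₁B^2)) + T₁/(4*((R₀A+T₀)*T₁-6*R₁B^2)),
         (T₀+R₀D)/(8*((R₀D+T₀)*T₁-6*R₁B^2)) - T₁/(4*((R₀A+T₀)*T₁-6*R₁B^2)), 0;
         (T₀+R₀D)/(8*((R₀D+T₀)*T₁-6*R₁B^2)) - T₁/(4*((R₀A+T₀)*T₁-6*R₁B^2)),
         (T₀+R₀D)/(8*((R₀D+T₀)*T₁-6*R₁B^2)) + T₁/(4*((R₀A+T₀)*T₁-6*R₁B^2)), 0;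
         0, 0, 1/(2*(T₀-R₀A))] :=
    aux_calA T₀ T₁ R₀A R₀D R₁B hT₁ hDpl hDmi hAmi hden1 hden2
  have hcalD : calD =
      !![(T₀+R₀A)/(8*((R₀A+T₀)*T₁-6*R₁B^2)) + T₁/(4*((R₀D+T₀)*T₁-6*R₁B^2)),
         (T₀+R₀A)/(8*((R₀A+T₀)*T₁-6*R₁B^2)) - T₁/(4*((R₀D+T₀)*T₁-6*R₁B^2)), 0;
         (T₀+R₀A)/(8*((R₀A+T₀)*T₁-6*R₁B^2)) - T₁/(4*((R₀D+T₀)*T₁-6*R₁B^2)),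
         (T₀+R₀A)/(8*((R₀A+T₀)*T₁-6*R₁B^2)) + T₁/(4*((R₀D+T₀)*T₁-6*R₁B^2)), 0;
         0, 0, 1/(2*(T₀-R₀D))] :=
    aux_calA T₀ T₁ R₀D R₀A R₁B hT₁ hApl hAmi hDmi hden2 hden1
  have hcalB : calB =
      !![-(3*R₁B/4)*(1/((R₀A+T₀)*T₁-6*R₁B^2) + 1/((R₀D+T₀)*T₁-6*R₁B^2)),
         -(3*R₁B/4)*(1/((R₀A+T₀)*T₁-6*R₁B^2) - 1/((R₀D+T₀)*T₁-6*R₁B^2)), 0;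
         (3*R₁B/4)*(1/((R₀A+T₀)*T₁-6*R₁B^2) - 1/((R₀D+T₀)*T₁-6*R₁B^2)),
         (3*R₁B/4)*(1/((R₀A+T₀)*T₁-6*R₁B^2) + 1/((R₀D+T₀)*T₁-6*R₁B^2)), 0;
         0, 0, 0] := by
    show (-3 : ℝ) • (calA * B * D⁻¹) = _
    rw [hcalA, hDinv]
    exact aux_calB T₀ T₁ R₀A R₀D R₁B hT₁ hDpl hDmi hAmi hden1 hden2
  have hcalBT : calB.transpose =
      !![-(3*R₁B/4)*(1/((R₀A+T₀)*T₁-6*R₁B^2) + 1/((R₀D+T₀)*T₁-6*R₁B^2)),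
         (3*R₁B/4)*(1/((R₀A+T₀)*T₁-6*R₁B^2) - 1/((R₀D+T₀)*T₁-6*R₁B^2)), 0;
         -(3*R₁B/4)*(1/((R₀A+T₀)*T₁-6*R₁B^2) - 1/((R₀D+T₀)*T₁-6*R₁B^2)),
         (3*R₁B/4)*(1/((R₀A+T₀)*T₁-6*R₁B^2) + 1/((R₀D+T₀)*T₁-6*R₁B^2)), 0;
         0, 0, 0] := by
    rw [hcalB]
    ext i j
    fin_cases i <;> fin_cases j <;> simp [Matrix.transpose_apply]
  clear hDinv
  refine ⟨?_, ?_, ?_, ?_, ?_, ?_⟩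
  · show calA.mulVec U + calB.mulVec V = _
    rw [hcalA, hcalB]
    funext i
    fin_cases i <;>
      (simp [U, V, Matrix.mulVec, dotProduct, Fin.sum_univ_three];
       try field_simp;
       try ring)
  · show calB.transpose.mulVec V + calD.mulVec W = _
    rw [hcalBT, hcalD]
    funext i
    fin_cases i <;>
      (simp [W, V, Matrix.mulVec, dotProduct, Fin.sum_univ_three,
         Matrix.transpose_apply];
       try field_simp;
       try ring)
  · show (2/h) * ((calB.transpose.mulVec U + (3:ℝ) • calD.mulVec V) 0) +
        (2/h) * ((calB.transpose.mulVec U + (3:ℝ) • calD.mulVec V) 1) = 0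
    rw [hcalBT, hcalD]
    simp [U, V, Matrix.mulVec, dotProduct, Fin.sum_univ_three,
      Matrix.transpose_apply]
    ring
  · show (2/h) * ((calB.transpose.mulVec U + (3:ℝ) • calD.mulVec V) 2) = 0
    rw [hcalBT, hcalD]
    simp [U, V, Matrix.mulVec, dotProduct, Fin.sum_univ_three,
      Matrix.transpose_apply]
  · show (h/6) * (((3:ℝ) • calA.mulVec V + calB.mulVec W) 0) +
        (h/6) * (((3:ℝ) • calA.mulVec V + calB.mulVec W) 1) = 0
    rw [hcalA, hcalB]
    simp [W, V, Matrix.mulVec, dotProduct, Fin.sum_univ_three]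
    ring
  · show (h/6) * (((3:ℝ) • calA.mulVec V + calB.mulVec W) 2) = 0
    rw [hcalA, hcalB]
    simp [W, V, Matrix.mulVec, dotProduct, Fin.sum_univ_three]
end
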